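/- arXiv:2007.09874 — 6 statements merged into one kernel-verified Lean document; each statement's English description precedes it below -/
import Mathlib

section
/- For every dimension d ≥ 1 and every k with 0 ≤ k ≤ d-1, there exists a constant c_d > 0 (depending only on d) such that for all ε ∈ (0,1), every (k,ε)-net for [0,1]^d has cardinality at least c_d / ε^{1 - k/d}. -/
open MeasureTheory
open scoped ENNReal NNReal

noncomputable section

/-- The unit cube `[0,1]^d` in `ℝ^d`. -/
def unitCube (d : ℕ) : Set (EuclideanSpace ℝ (Fin d)) :=
  {x | ∀ i, x i ∈ Set.Icc (0 : ℝ) 1}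

abbrev Euc (d : ℕ) := EuclideanSpace ℝ (Fin d)

lemma coord_box_eq {ι : Type*} [Fintype ι] (l u : ι → ℝ) :
    {x : EuclideanSpace ℝ ι | ∀ i, x i ∈ Set.Icc (l i) (u i)} =
      (MeasurableEquiv.toLp 2 (ι → ℝ)).symm ⁻¹' (Set.univ.pi fun i => Set.Icc (l i) (u i)) := by
  ext x
  simp only [Set.mem_pi, Set.mem_univ, forall_true_left, Set.mem_preimage, Set.mem_setOf_eq,
    MeasurableEquiv.coe_toLp_symm, forall_const]

lemma measurableSet_coord_box {ι : Type*} [Fintype ι] (l u : ι → ℝ) :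
    MeasurableSet {x : EuclideanSpace ℝ ι | ∀ i, x i ∈ Set.Icc (l i) (u i)} := by
  rw [coord_box_eq]
  exact (MeasurableEquiv.toLp 2 (ι → ℝ)).symm.measurable
    (MeasurableSet.univ_pi fun i => measurableSet_Icc)

lemma volume_coord_box {ι : Type*} [Fintype ι] (l u : ι → ℝ) :
    volume {x : EuclideanSpace ℝ ι | ∀ i, x i ∈ Set.Icc (l i) (u i)} =
      ∏ i, ENNReal.ofReal (u i - l i) := by
  rw [coord_box_eq, (EuclideanSpace.volume_preserving_symm_measurableEquiv_toLp ι).measure_preimage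
      ((MeasurableSet.univ_pi fun i => measurableSet_Icc).nullMeasurableSet)]
  rw [volume_pi_pi]
  simp [Real.volume_Icc]

lemma dist_le_coords {d : ℕ} (x y : Euc d) (c : ℝ) (hc : 0 ≤ c)
    (h : ∀ i, |x i - y i| ≤ c) : dist x y ≤ Real.sqrt d * c := by
  rw [EuclideanSpace.dist_eq]
  have hsum : ∑ i, dist (x i) (y i) ^ 2 ≤ (d : ℝ) * c ^ 2 := by
    calc ∑ i, dist (x i) (y i) ^ 2 ≤ ∑ _i : Fin d, c ^ 2 := by
          apply Finset.sum_le_sum; intro i _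
          rw [Real.dist_eq]
          exact pow_le_pow_left₀ (abs_nonneg _) (h i) 2
      _ = (d : ℝ) * c ^ 2 := by simp [mul_comm]
  calc Real.sqrt (∑ i, dist (x i) (y i) ^ 2) ≤ Real.sqrt ((d : ℝ) * c ^ 2) :=
        Real.sqrt_le_sqrt hsum
    _ = Real.sqrt d * c := by
        rw [Real.sqrt_mul (Nat.cast_nonneg d), Real.sqrt_sq hc]

lemma volume_unitCube (d : ℕ) : volume (unitCube d) = 1 := by
  have : unitCube d = {x : Euc d | ∀ i, x i ∈ Set.Icc ((fun _ => (0:ℝ)) i) ((fun _ => (1:ℝ)) i)} := rfl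
  rw [this, volume_coord_box]
  simp

lemma isClosed_unitCube (d : ℕ) : IsClosed (unitCube d) := by
  have : unitCube d = ⋂ i, (EuclideanSpace.proj (𝕜 := ℝ) i) ⁻¹' (Set.Icc (0:ℝ) 1) := by
    ext x; simp [unitCube]
  rw [this]
  exact isClosed_iInter fun i => isClosed_Icc.preimage (EuclideanSpace.proj i).continuous

lemma isCompact_unitCube (d : ℕ) : IsCompact (unitCube d) := by
  apply Metric.isCompact_of_isClosed_isBounded (isClosed_unitCube d)
  apply Bornology.IsBounded.subset (Metric.isBounded_closedBall (x := (0 : Euc d)) (r := Real.sqrt d))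
  intro x hx
  have : dist x 0 ≤ Real.sqrt d * 1 := by
    apply dist_le_coords x 0 1 zero_le_one
    intro i
    have h := hx i
    simp only [Set.mem_Icc] at h
    rw [PiLp.zero_apply, sub_zero, abs_le]
    exact ⟨by linarith [h.1], h.2⟩
  simpa using this

lemma convex_unitCube (d : ℕ) : Convex ℝ (unitCube d) := by
  intro x hx y hy a b ha hb hab
  intro i
  have h := (convex_Icc (0:ℝ) 1) (hx i) (hy i) ha hb hab
  simpa [PiLp.add_apply, PiLp.smul_apply, smul_eq_mul] using h
lemma tube_volume_le {d k : ℕ} (hk : k ≤ d)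
    (f : AffineSubspace ℝ (Euc d)) (hdim : Module.finrank ℝ f.direction = k)
    (a : Euc d) (ha : a ∈ f) (r R : ℝ) (hr : 0 ≤ r) (hR : 0 ≤ R) :
    volume {x : Euc d | ‖x - a‖ ≤ R ∧ ∃ y ∈ (f : Set (Euc d)), dist x y ≤ r} ≤
      ENNReal.ofReal ((2*R)^k * (2*r)^(d-k)) := by
  classical
  set V := f.direction with hV
  set A : Bool → Submodule ℝ (Euc d) := fun b => cond b V Vᗮ with hA
  have hOrth : OrthogonalFamily ℝ (fun b => A b) (fun b => (A b).subtypeₗᵢ) := by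
    intro i j hij v w
    match i, j with
    | true, true => exact absurd rfl hij
    | false, false => exact absurd rfl hij
    | true, false =>
        exact (Submodule.mem_orthogonal V (w : Euc d)).1 w.2 (v : Euc d) v.2
    | false, true =>
        exact real_inner_comm (w : Euc d) (v : Euc d) ▸
          (Submodule.mem_orthogonal V (v : Euc d)).1 v.2 (w : Euc d) w.2
  have hInt : DirectSum.IsInternal A := by
    rw [hOrth.isInternal_iff]
    rw [iSup_bool_eq]
    show (V ⊔ Vᗮ)ᗮ = ⊥
    rw [(Submodule.isCompl_orthogonal_of_hasOrthogonalProjection (K := V)).sup_eq_top]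
    exact Submodule.top_orthogonal_eq_bot
  let bas := hInt.collectedOrthonormalBasis hOrth (fun b => stdOrthonormalBasis ℝ (A b))
  set len : ((b : Bool) × Fin (Module.finrank ℝ (A b))) → ℝ := fun j => cond j.1 R r with hlen
  have hlen_nonneg : ∀ j, 0 ≤ len j := by rintro ⟨b, i⟩; cases b <;> simpa [hlen]
  set Box : Set (EuclideanSpace ℝ ((b : Bool) × Fin (Module.finrank ℝ (A b)))) :=
    {y | ∀ j, y j ∈ Set.Icc (-(len j)) (len j)} with hBox
  have hsub : {x : Euc d | ‖x - a‖ ≤ R ∧ ∃ y ∈ (f : Set (Euc d)), dist x y ≤ r} ⊆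
      (fun z => z - a) ⁻¹' (bas.repr ⁻¹' Box) := by
    rintro x ⟨hxR, y, hyf, hxy⟩
    show bas.repr (x - a) ∈ Box
    intro j
    rw [OrthonormalBasis.repr_apply_apply]
    rw [Set.mem_Icc, ← abs_le]
    rcases j with ⟨b, i⟩
    cases b
    · -- b = false : bas vector in Vᗮ
      have hmem : bas ⟨false, i⟩ ∈ Vᗮ :=
        hInt.collectedOrthonormalBasis_mem hOrth (fun b => stdOrthonormalBasis ℝ (A b)) ⟨false, i⟩
      have hya : y - a ∈ V := AffineSubspace.vsub_mem_direction hyf ha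
      have hsplit : x - a = (x - y) + (y - a) := by abel
      have h0 : inner ℝ (bas ⟨false, i⟩) (y - a) = (0 : ℝ) := by
        rw [real_inner_comm]
        exact (Submodule.mem_orthogonal V _).1 hmem _ hya
      rw [hsplit, inner_add_right, h0, add_zero]
      calc |(inner ℝ (bas ⟨false, i⟩) (x - y) : ℝ)| ≤ ‖bas ⟨false, i⟩‖ * ‖x - y‖ :=
            abs_real_inner_le_norm _ _
        _ ≤ 1 * r := by
            apply mul_le_mul (le_of_eq (bas.orthonormal.1 _)) _ (norm_nonneg _) zero_le_one
            rw [← dist_eq_norm]; exact hxy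
        _ = r := one_mul r
    · -- b = true
      calc |(inner ℝ (bas ⟨true, i⟩) (x - a) : ℝ)| ≤ ‖bas ⟨true, i⟩‖ * ‖x - a‖ :=
            abs_real_inner_le_norm _ _
        _ ≤ 1 * R := mul_le_mul (le_of_eq (bas.orthonormal.1 _)) hxR (norm_nonneg _) zero_le_one
        _ = R := one_mul R
  calc volume {x : Euc d | ‖x - a‖ ≤ R ∧ ∃ y ∈ (f : Set (Euc d)), dist x y ≤ r}
      ≤ volume ((fun z => z - a) ⁻¹' (bas.repr ⁻¹' Box)) := measure_mono hsub
    _ = volume (bas.repr ⁻¹' Box) := by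
        simpa [sub_eq_add_neg] using
          measure_preimage_add_right (volume : Measure (Euc d)) (-a) (bas.repr ⁻¹' Box)
    _ = volume Box := bas.measurePreserving_repr.measure_preimage
          (measurableSet_coord_box _ _).nullMeasurableSet
    _ = ∏ j, ENNReal.ofReal (2 * len j) := by
        rw [volume_coord_box]
        exact Finset.prod_congr rfl fun j _ => by rw [sub_neg_eq_add, two_mul]
    _ = ENNReal.ofReal ((2*R)^k * (2*r)^(d-k)) := by
        have hkt : Module.finrank ℝ (A true) = k := hdim
        have hkf : Module.finrank ℝ (A false) = d - k := by
          have h2 := Submodule.finrank_add_finrank_orthogonal (K := V)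
          rw [hdim, finrank_euclideanSpace_fin] at h2
          show Module.finrank ℝ Vᗮ = d - k
          omega
        rw [← Finset.univ_sigma_univ, Finset.prod_sigma, Fintype.prod_bool]
        simp only [hlen, cond_true, cond_false]
        rw [Finset.prod_const, Finset.prod_const, Finset.card_univ, Finset.card_univ,
          Fintype.card_fin, Fintype.card_fin, hkt, hkf,
          ← ENNReal.ofReal_pow (by positivity), ← ENNReal.ofReal_pow (by positivity),
          ← ENNReal.ofReal_mul (by positivity)]


/-- A `k`-flat in `ℝ^d`: a (nonempty) affine subspace of dimension `k`. -/
def IsKFlat (d k : ℕ) (f : AffineSubspace ℝ (EuclideanSpace ℝ (Fin d))) : Prop :=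
  (f : Set (EuclideanSpace ℝ (Fin d))).Nonempty ∧ Module.finrank ℝ f.direction = k

/-- A family `S` of flats is a `(k,ε)`-net for `[0,1]^d` if every compact convex set `Ξ`
with `vol (Ξ ∩ [0,1]^d) ≥ ε` is intersected by some flat of `S`. -/
def IsKENet (d : ℕ) (ε : ℝ)
    (S : Set (AffineSubspace ℝ (EuclideanSpace ℝ (Fin d)))) : Prop :=
  ∀ Ξ : Set (EuclideanSpace ℝ (Fin d)), IsCompact Ξ → Convex ℝ Ξ →
    ENNReal.ofReal ε ≤ volume (Ξ ∩ unitCube d) →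
    ∃ f ∈ S, (Ξ ∩ (f : Set (EuclideanSpace ℝ (Fin d)))).Nonempty

/-- Any `(k,ε)`-net for `[0,1]^d` has size at least `c_d / ε^(1 - k/d)`. -/
theorem lower_bound_kenet (d k : ℕ) (hd : 1 ≤ d) (hk : k ≤ d - 1) :
    ∃ c : ℝ, 0 < c ∧ ∀ ε : ℝ, ε ∈ Set.Ioo (0 : ℝ) 1 →
      ∀ S : Finset (AffineSubspace ℝ (EuclideanSpace ℝ (Fin d))),
        (∀ f ∈ S, IsKFlat d k f) →
        IsKENet d ε (S : Set (AffineSubspace ℝ (EuclideanSpace ℝ (Fin d)))) →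
        c / ε ^ ((1 : ℝ) - (k : ℝ) / (d : ℝ)) ≤ (S.card : ℝ) := by
  have hd0 : (0:ℝ) < d := by exact_mod_cast hd
  set sd : ℝ := Real.sqrt d with hsd_def
  have hsd1 : 1 ≤ sd := by
    rw [show (1:ℝ) = Real.sqrt 1 by simp]
    exact Real.sqrt_le_sqrt (by exact_mod_cast hd)
  have hsd0 : 0 < sd := lt_of_lt_of_le one_pos hsd1
  have hkd : k < d := by omega
  set α : ℝ := (1 : ℝ) - (k : ℝ) / (d : ℝ) with hα_def
  have hα0 : 0 < α := by
    have : (k:ℝ)/(d:ℝ) < 1 := (div_lt_one hd0).mpr (by exact_mod_cast hkd)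
    simp only [hα_def]; linarith
  have hα1 : α ≤ 1 := by
    have : (0:ℝ) ≤ (k:ℝ)/(d:ℝ) := by positivity
    simp only [hα_def]; linarith
  set c1 : ℝ := ((4*sd)^d)⁻¹ with hc1_def
  set c2 : ℝ := (1/2:ℝ)^d with hc2_def
  have hc10 : 0 < c1 := by positivity
  have hc20 : 0 < c2 := by positivity
  refine ⟨min c1 c2, lt_min hc10 hc20, ?_⟩
  rintro ε ⟨hε0, hε1⟩ S hflats hnet
  have hεα0 : 0 < ε ^ α := Real.rpow_pos_of_pos hε0 _
  have hS1 : 1 ≤ S.card := by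
    obtain ⟨f, hfS, -⟩ := hnet (unitCube d) (isCompact_unitCube d) (convex_unitCube d) (by
      rw [Set.inter_self, volume_unitCube]
      exact ENNReal.ofReal_le_one.mpr hε1.le)
    exact Finset.card_pos.mpr ⟨f, hfS⟩
  by_cases hcase : ε ≤ c2
  swap
  · -- large ε
    push_neg at hcase
    have hεα : ε ≤ ε ^ α := by
      have := Real.rpow_le_rpow_of_exponent_ge hε0 hε1.le hα1
      rwa [Real.rpow_one] at this
    have h1 : min c1 c2 / ε ^ α ≤ 1 := by
      rw [div_le_one hεα0]
      calc min c1 c2 ≤ c2 := min_le_right _ _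
        _ ≤ ε := hcase.le
        _ ≤ ε ^ α := hεα
    calc min c1 c2 / ε ^ α ≤ 1 := h1
      _ ≤ (S.card : ℝ) := by exact_mod_cast hS1
  -- main case : ε ≤ (1/2)^d
  set s : ℝ := ε ^ ((1:ℝ)/(d:ℝ)) with hs_def
  have hs0 : 0 < s := Real.rpow_pos_of_pos hε0 _
  have hd_ne : ((d:ℝ)) ≠ 0 := ne_of_gt hd0
  have hs_half : s ≤ 1/2 := by
    calc s ≤ c2 ^ ((1:ℝ)/(d:ℝ)) := Real.rpow_le_rpow hε0.le hcase (by positivity)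
      _ = 1/2 := by
        rw [hc2_def, ← Real.rpow_natCast (1/2:ℝ) d, ← Real.rpow_mul (by norm_num)]
        rw [mul_one_div, div_self hd_ne, Real.rpow_one]
  have hs_pow : s ^ d = ε := by
    rw [hs_def, ← Real.rpow_natCast (ε ^ ((1:ℝ)/(d:ℝ))) d, ← Real.rpow_mul hε0.le]
    rw [one_div_mul_cancel hd_ne, Real.rpow_one]
  set r : ℝ := sd * s with hr_def
  have hr0 : 0 < r := mul_pos hsd0 hs0
  set T : AffineSubspace ℝ (Euc d) → Set (Euc d) :=
    fun f => Metric.cthickening r (f : Set (Euc d)) ∩ unitCube d with hT_def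
  -- complement of the union of tubes in the cube is null
  have hnull : volume (unitCube d \ ⋃ f ∈ S, T f) = 0 := by
    by_contra hpos
    obtain ⟨x0, hx0c, hx0n⟩ := nonempty_of_measure_ne_zero hpos
    set l : Fin d → ℝ := fun i => if x0 i + s ≤ 1 then x0 i else x0 i - s with hl_def
    set box : Set (Euc d) := {x | ∀ i, x i ∈ Set.Icc (l i) (l i + s)} with hbox_def
    have hx0_mem : ∀ i, x0 i ∈ Set.Icc (l i) (l i + s) := by
      intro i
      simp only [hl_def]
      split <;> constructor <;> simp <;> linarith [hs0]
    have hbox_cube : box ⊆ unitCube d := by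
      intro x hx i
      have h := hx i
      have h0 := (hx0c i).1
      have h1 := (hx0c i).2
      simp only [hl_def] at h
      simp only [Set.mem_Icc] at h ⊢
      split at h
      · constructor <;> linarith [h.1, h.2]
      · constructor <;> [linarith [h.1]; linarith [h.2, hs_half]]
    have hbox_ball : box ⊆ Metric.closedBall x0 r := by
      intro x hx
      rw [Metric.mem_closedBall]
      have : dist x x0 ≤ Real.sqrt d * s := by
        apply dist_le_coords _ _ _ hs0.le
        intro i
        have h1 := hx i
        have h2 := hx0_mem i
        simp only [Set.mem_Icc] at h1 h2
        rw [abs_le]; constructor <;> linarith [h1.1, h1.2, h2.1, h2.2]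
      simpa [hr_def] using this
    set Ξ : Set (Euc d) := Metric.closedBall x0 r ∩ unitCube d with hΞ_def
    have hvolΞ : ENNReal.ofReal ε ≤ volume (Ξ ∩ unitCube d) := by
      have hsub : box ⊆ Ξ ∩ unitCube d := by
        intro x hx
        exact ⟨⟨hbox_ball hx, hbox_cube hx⟩, hbox_cube hx⟩
      calc ENNReal.ofReal ε = volume box := by
            rw [hbox_def, volume_coord_box]
            have : ∀ i : Fin d, ENNReal.ofReal (l i + s - l i) = ENNReal.ofReal s := by
              intro i; congr 1; ring
            simp only [this, Finset.prod_const, Finset.card_univ, Fintype.card_fin]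
            rw [← ENNReal.ofReal_pow hs0.le, hs_pow]
        _ ≤ volume (Ξ ∩ unitCube d) := measure_mono hsub
    obtain ⟨f, hfS, z, hzΞ, hzf⟩ := hnet Ξ
      ((isCompact_closedBall _ _).inter_right (isClosed_unitCube d))
      ((convex_closedBall _ _).inter (convex_unitCube d)) hvolΞ
    apply hx0n
    refine Set.mem_biUnion hfS ⟨?_, hx0c⟩
    exact Metric.mem_cthickening_of_dist_le x0 z r _ hzf
      (by rw [dist_comm]; exact Metric.mem_closedBall.1 hzΞ.1)
  -- counting
  set P : ℝ := (4*sd)^k * (4*r)^(d-k) with hP_def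
  have hP0 : 0 < P := by positivity
  have hTf : ∀ f ∈ S, volume (T f) ≤ ENNReal.ofReal P := by
    intro f hfS
    rcases Set.eq_empty_or_nonempty (T f) with he | ⟨x1, hx1t, hx1c⟩
    · simp [he]
    have hfne : (f : Set (Euc d)).Nonempty := (hflats f hfS).1
    have hdim := (hflats f hfS).2
    have hinf : ∀ x ∈ T f, ∃ y ∈ (f : Set (Euc d)), dist x y < 2*r := by
      rintro x ⟨hxt, -⟩
      rw [← Metric.infDist_lt_iff hfne]
      have h1 : EMetric.infEdist x (f : Set (Euc d)) ≤ ENNReal.ofReal r :=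
        Metric.mem_cthickening_iff.1 hxt
      have h2 : Metric.infDist x (f : Set (Euc d)) ≤ r :=
        ENNReal.toReal_le_of_le_ofReal hr0.le h1
      linarith
    obtain ⟨a, haf, hax1⟩ := hinf x1 ⟨hx1t, hx1c⟩
    have h2r_sd : 2*r ≤ sd := by
      rw [hr_def]
      nlinarith [hs_half, hsd0]
    have hsub : T f ⊆ {x : Euc d | ‖x - a‖ ≤ 2*sd ∧ ∃ y ∈ (f : Set (Euc d)), dist x y ≤ 2*r} := by
      rintro x ⟨hxt, hxc⟩
      obtain ⟨y, hyf, hxy⟩ := hinf x ⟨hxt, hxc⟩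
      refine ⟨?_, y, hyf, hxy.le⟩
      rw [← dist_eq_norm]
      have hxx1 : dist x x1 ≤ sd * 1 := by
        apply dist_le_coords _ _ _ zero_le_one
        intro i
        have h1 := hxc i
        have h2 := hx1c i
        simp only [Set.mem_Icc] at h1 h2
        rw [abs_le]; constructor <;> linarith [h1.1, h1.2, h2.1, h2.2]
      calc dist x a ≤ dist x x1 + dist x1 a := dist_triangle _ _ _
        _ ≤ sd * 1 + 2*r := add_le_add hxx1 hax1.le
        _ ≤ 2*sd := by linarith [h2r_sd]
    calc volume (T f) ≤ volume {x : Euc d | ‖x - a‖ ≤ 2*sd ∧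
          ∃ y ∈ (f : Set (Euc d)), dist x y ≤ 2*r} := measure_mono hsub
      _ ≤ ENNReal.ofReal ((2*(2*sd))^k * (2*(2*r))^(d-k)) :=
          tube_volume_le hkd.le f hdim a haf (2*r) (2*sd) (by positivity) (by positivity)
      _ = ENNReal.ofReal P := by rw [hP_def]; ring_nf
  have hcount : (1:ℝ≥0∞) ≤ (S.card : ℝ≥0∞) * ENNReal.ofReal P := by
    calc (1:ℝ≥0∞) = volume (unitCube d) := (volume_unitCube d).symm
      _ ≤ volume (unitCube d \ ⋃ f ∈ S, T f) + volume (⋃ f ∈ S, T f) :=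
          le_trans (measure_mono (Set.subset_diff_union _ _)) (measure_union_le _ _)
      _ = volume (⋃ f ∈ S, T f) := by rw [hnull, zero_add]
      _ ≤ ∑ f ∈ S, volume (T f) := measure_biUnion_finset_le _ _
      _ ≤ ∑ _f ∈ S, ENNReal.ofReal P := Finset.sum_le_sum hTf
      _ = (S.card : ℝ≥0∞) * ENNReal.ofReal P := by
          rw [Finset.sum_const, nsmul_eq_mul]
  have hreal : 1 ≤ (S.card : ℝ) * P := by
    have h1 : ((S.card : ℝ≥0∞)) * ENNReal.ofReal P = ENNReal.ofReal ((S.card : ℝ) * P) := by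
      rw [← ENNReal.ofReal_natCast S.card, ← ENNReal.ofReal_mul (Nat.cast_nonneg _)]
    rw [h1] at hcount
    have h2 : ENNReal.ofReal (1:ℝ) ≤ ENNReal.ofReal ((S.card : ℝ) * P) := by
      rw [ENNReal.ofReal_one]; exact hcount
    exact (ENNReal.ofReal_le_ofReal_iff (by positivity)).1 h2
  have hPval : P = (4*sd)^d * ε ^ α := by
    have h3 : s^(d-k) = ε ^ α := by
      rw [← Real.rpow_natCast s (d-k), hs_def, ← Real.rpow_mul hε0.le]
      congr 1
      rw [Nat.cast_sub hkd.le, hα_def]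
      field_simp
    calc P = ((4*sd)^k * (4*sd)^(d-k)) * s^(d-k) := by rw [hP_def, hr_def]; ring
      _ = (4*sd)^d * s^(d-k) := by rw [← pow_add]; congr 2; omega
      _ = (4*sd)^d * ε ^ α := by rw [h3]
  have hfinal : min c1 c2 / ε ^ α ≤ 1 / P := by
    rw [hPval, hc1_def]
    rw [div_le_div_iff₀ hεα0 (by positivity)]
    calc min c1 c2 * ((4*sd)^d * ε ^ α) ≤ c1 * ((4*sd)^d * ε ^ α) := by
          apply mul_le_mul_of_nonneg_right (min_le_left _ _) (by positivity)
      _ = 1 * ε ^ α := by rw [hc1_def]; field_simp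
  calc min c1 c2 / ε ^ α ≤ 1 / P := hfinal
    _ ≤ (S.card : ℝ) := by
        rw [div_le_iff₀ hP0]
        linarith
end
end

section
/- Let d ≥ 1 and 0 ≤ k ≤ d-1. For every k-flat f in ℝ^d and every r > 0, the d-dimensional Lebesgue volume of the set {x ∈ [0,1]^d : dist(x, f) ≤ r} is at most d^{k/2} · ω_{d-k} · r^{d-k}, where ω_{d-k} denotes the Lebesgue volume of the Euclidean unit ball in ℝ^{d-k}. -/
open MeasureTheory Metric Set
open scoped RealInnerProductSpace

noncomputable section

/-- The volume of the part of `[0,1]^d` within distance `r` of a `k`-flat `f` is at most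
`d^(k/2) · ω_{d-k} · r^(d-k)`, where `ω_{d-k}` is the volume of the Euclidean unit ball
in `ℝ^{d-k}`. -/
theorem volume_tube_le (d k : ℕ) (hd : 1 ≤ d) (hk : k ≤ d - 1)
    (f : AffineSubspace ℝ (EuclideanSpace ℝ (Fin d))) (hf : IsKFlat d k f)
    (r : ℝ) (hr : 0 < r) :
    volume {x | x ∈ unitCube d ∧
        Metric.infDist x (f : Set (EuclideanSpace ℝ (Fin d))) ≤ r} ≤
      ENNReal.ofReal ((d : ℝ) ^ ((k : ℝ) / 2) *
        (volume (Metric.closedBall (0 : EuclideanSpace ℝ (Fin (d - k))) 1)).toReal *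
        r ^ (d - k)) := by
  classical
  set E := EuclideanSpace ℝ (Fin d) with hE
  obtain ⟨⟨p₀, hp₀⟩, hdim⟩ := hf
  set K := f.direction with hKdef
  have hkd : k ≤ d := le_trans hk (Nat.sub_le d 1)
  have hdk1 : 1 ≤ d - k := by omega
  have hKrank : Module.finrank ℝ K = k := hdim
  have hKorank : Module.finrank ℝ Kᗮ = d - k := by
    have h1 : Module.finrank ℝ K + Module.finrank ℝ Kᗮ = Module.finrank ℝ E :=
      K.finrank_add_finrank_orthogonal
    have h2 : Module.finrank ℝ E = d := finrank_euclideanSpace_fin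
    omega
  -- adapted orthonormal basis
  let b1 : OrthonormalBasis (Fin k) ℝ K :=
    (stdOrthonormalBasis ℝ K).reindex (finCongr hKrank)
  let b2 : OrthonormalBasis (Fin (d - k)) ℝ (Kᗮ : Submodule ℝ E) :=
    (stdOrthonormalBasis ℝ (Kᗮ : Submodule ℝ E)).reindex (finCongr hKorank)
  let v : Fin k ⊕ Fin (d - k) → E := Sum.elim (fun i => (b1 i : E)) (fun j => (b2 j : E))
  have hv : Orthonormal ℝ v := by
    constructor
    · rintro (i | j)
      · exact b1.orthonormal.1 i
      · exact b2.orthonormal.1 j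
    · rintro (i | i) (j | j) hij
      · have : i ≠ j := fun h => hij (by rw [h])
        simpa [v, Submodule.coe_inner] using b1.orthonormal.2 this
      · exact Submodule.inner_right_of_mem_orthogonal (b1 i).2 (b2 j).2
      · exact Submodule.inner_left_of_mem_orthogonal (b1 j).2 (b2 i).2
      · have : i ≠ j := fun h => hij (by rw [h])
        simpa [v, Submodule.coe_inner] using b2.orthonormal.2 this
  haveI : Nonempty (Fin k ⊕ Fin (d - k)) := ⟨Sum.inr ⟨0, by omega⟩⟩
  have hspan : ⊤ ≤ Submodule.span ℝ (Set.range v) := by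
    rw [hv.linearIndependent.span_eq_top_of_card_eq_finrank
      (by rw [Fintype.card_sum, Fintype.card_fin, Fintype.card_fin,
        show Module.finrank ℝ E = d from finrank_euclideanSpace_fin]; omega)]
  let B : OrthonormalBasis (Fin k ⊕ Fin (d - k)) ℝ E := OrthonormalBasis.mk hv hspan
  -- center of cube
  let c : E := WithLp.toLp 2 (fun _ => (1 : ℝ) / 2)
  let s : ℝ := Real.sqrt d / 2
  let a : Fin k → ℝ := fun i => ⟪v (Sum.inl i), c - p₀⟫
  -- target sets
  let A : Set (Fin k → ℝ) := Set.univ.pi fun i => Set.Icc (a i - s) (a i + s)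
  let Bs : Set (Fin (d - k) → ℝ) := {z | ∑ j, z j ^ 2 ≤ r ^ 2}
  have hAmeas : MeasurableSet A := MeasurableSet.univ_pi fun i => measurableSet_Icc
  have hBmeas : MeasurableSet Bs := by
    apply measurableSet_le _ measurable_const
    exact Finset.measurable_sum _ fun j _ => (measurable_pi_apply j).pow_const 2
  -- combined map
  let φ : E → (Fin k → ℝ) × (Fin (d - k) → ℝ) := fun x =>
    (MeasurableEquiv.sumPiEquivProdPi (fun _ : Fin k ⊕ Fin (d - k) => ℝ))
      ((MeasurableEquiv.toLp 2 (Fin k ⊕ Fin (d - k) → ℝ)).symm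
        (B.repr (x - p₀)))
  have hφ : MeasurePreserving φ volume volume :=
    ((volume_measurePreserving_sumPiEquivProdPi _).comp
      ((EuclideanSpace.volume_preserving_symm_measurableEquiv_toLp _).comp
        (B.measurePreserving_repr.comp (measurePreserving_sub_right volume p₀))))
  have hφ1 : ∀ x i, (φ x).1 i = ⟪v (Sum.inl i), x - p₀⟫ := by
    intro x i
    simp [φ, MeasurableEquiv.coe_sumPiEquivProdPi, Equiv.sumPiEquivProdPi,
      MeasurableEquiv.coe_toLp_symm, B, OrthonormalBasis.repr_apply_apply,
      OrthonormalBasis.coe_mk, inner_sub_right]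
  have hφ2 : ∀ x j, (φ x).2 j = ⟪v (Sum.inr j), x - p₀⟫ := by
    intro x j
    simp [φ, MeasurableEquiv.coe_sumPiEquivProdPi, Equiv.sumPiEquivProdPi,
      MeasurableEquiv.coe_toLp_symm, B, OrthonormalBasis.repr_apply_apply,
      OrthonormalBasis.coe_mk, inner_sub_right]
  -- containment
  have hsub : {x : E | x ∈ unitCube d ∧ Metric.infDist x (f : Set E) ≤ r}
      ⊆ φ ⁻¹' (A ×ˢ Bs) := by
    rintro x ⟨hx1, hx2⟩
    have hxc : ‖x - c‖ ≤ s := by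
      rw [EuclideanSpace.norm_eq]
      have h2 : ∑ i, ‖(x - c) i‖ ^ 2 ≤ (d : ℝ) * (1 / 4) := by
        have : ∀ i : Fin d, ‖(x - c) i‖ ^ 2 ≤ 1 / 4 := by
          intro i
          have hxi := hx1 i
          simp only [Set.mem_Icc] at hxi
          have : (x - c) i = x i - 1 / 2 := by
            simp [c, E]
          rw [this, Real.norm_eq_abs, sq_abs]
          nlinarith [hxi.1, hxi.2]
        calc ∑ i, ‖(x - c) i‖ ^ 2 ≤ ∑ _i : Fin d, (1 / 4 : ℝ) :=
              Finset.sum_le_sum fun i _ => this i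
          _ = (d : ℝ) * (1 / 4) := by simp [mul_comm]
      calc Real.sqrt (∑ i, ‖(x - c) i‖ ^ 2) ≤ Real.sqrt ((d : ℝ) * (1 / 4)) :=
            Real.sqrt_le_sqrt h2
        _ = s := by
            rw [Real.sqrt_mul (Nat.cast_nonneg d), show (1 / 4 : ℝ) = (1 / 2) ^ 2 by norm_num,
              Real.sqrt_sq (by norm_num)]
            simp [s]
            ring
    constructor
    · -- A part
      intro i _
      have hdiff : (φ x).1 i - a i = ⟪v (Sum.inl i), x - c⟫ := by
        rw [hφ1]
        simp only [a, inner_sub_right]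
        ring
      have hb : |(φ x).1 i - a i| ≤ s := by
        rw [hdiff]
        calc |⟪v (Sum.inl i), x - c⟫| ≤ ‖v (Sum.inl i)‖ * ‖x - c‖ := abs_real_inner_le_norm _ _
          _ ≤ 1 * s := by rw [hv.1]; simpa using hxc
          _ = s := one_mul s
      have := abs_le.mp hb
      exact Set.mem_Icc.mpr ⟨by linarith [this.1], by linarith [this.2]⟩
    · -- Bs part
      show ∑ j, ((φ x).2 j) ^ 2 ≤ r ^ 2
      have hφ2' : ∀ j, (φ x).2 j = ⟪v (Sum.inr j), x - p₀⟫ := hφ2 x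
      set S := ∑ j, ⟪v (Sum.inr j), x - p₀⟫ ^ 2 with hSdef
      have hS0 : 0 ≤ S := Finset.sum_nonneg fun j _ => sq_nonneg _
      have hq : ∀ q ∈ (f : Set E), Real.sqrt S ≤ dist x q := by
        intro q hqf
        have hqq : q - p₀ ∈ K := by
          have := AffineSubspace.vsub_mem_direction hqf hp₀
          simpa [vsub_eq_sub] using this
        have horth : ∀ j, ⟪v (Sum.inr j), x - p₀⟫ = ⟪v (Sum.inr j), x - q⟫ := by
          intro j
          have h0 : ⟪v (Sum.inr j), q - p₀⟫ = 0 :=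
            Submodule.inner_left_of_mem_orthogonal hqq (b2 j).2
          have hxp : x - p₀ = (x - q) + (q - p₀) := by abel
          rw [hxp, inner_add_right, h0, add_zero]
        have hw : Orthonormal ℝ (fun j => v (Sum.inr j)) := hv.comp Sum.inr Sum.inr_injective
        have hb : ∑ j, ‖⟪v (Sum.inr j), x - q⟫‖ ^ 2 ≤ ‖x - q‖ ^ 2 :=
          hw.sum_inner_products_le (x := x - q) (s := Finset.univ)
        have hS' : S ≤ ‖x - q‖ ^ 2 := by
          rw [hSdef]
          simp_rw [horth]
          calc ∑ j, ⟪v (Sum.inr j), x - q⟫ ^ 2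
              = ∑ j, ‖⟪v (Sum.inr j), x - q⟫‖ ^ 2 := by
                simp [Real.norm_eq_abs, sq_abs]
            _ ≤ ‖x - q‖ ^ 2 := hb
        calc Real.sqrt S ≤ Real.sqrt (‖x - q‖ ^ 2) := Real.sqrt_le_sqrt hS'
          _ = ‖x - q‖ := Real.sqrt_sq (norm_nonneg _)
          _ = dist x q := (dist_eq_norm _ _).symm
      have hSr : Real.sqrt S ≤ r := by
        by_contra h
        push_neg at h
        obtain ⟨q, hqf, hql⟩ := (Metric.infDist_lt_iff ⟨p₀, hp₀⟩).mp (lt_of_le_of_lt hx2 h)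
        exact absurd (hq q hqf) (not_le.mpr hql)
      have hfin : S ≤ r ^ 2 := by
        calc S = Real.sqrt S ^ 2 := (Real.sq_sqrt hS0).symm
          _ ≤ r ^ 2 := pow_le_pow_left₀ (Real.sqrt_nonneg _) hSr 2
      simpa [hφ2'] using hfin
  -- volume of the box part
  have hA : volume A = ENNReal.ofReal (Real.sqrt d) ^ k := by
    rw [volume_pi_pi]
    have : ∀ i : Fin k, volume (Set.Icc (a i - s) (a i + s)) = ENNReal.ofReal (Real.sqrt d) := by
      intro i
      rw [Real.volume_Icc]
      congr 1
      simp only [s]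
      ring
    simp_rw [this]
    simp
  -- volume of the ball part
  have hBvol : volume Bs = ENNReal.ofReal (r ^ (d - k)) *
      volume (Metric.closedBall (0 : EuclideanSpace ℝ (Fin (d - k))) 1) := by
    have hpre : (MeasurableEquiv.toLp 2 (Fin (d - k) → ℝ)).symm ⁻¹' Bs
        = Metric.closedBall (0 : EuclideanSpace ℝ (Fin (d - k))) r := by
      ext y
      simp only [Set.mem_preimage, Metric.mem_closedBall, dist_zero_right]
      have hy : (MeasurableEquiv.toLp 2 (Fin (d - k) → ℝ)).symm y ∈ Bs
          ↔ ∑ j, (y j : ℝ) ^ 2 ≤ r ^ 2 := Iff.rfl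
      rw [hy]
      have hnorm : ‖y‖ = Real.sqrt (∑ j, (y j) ^ 2) := by
        rw [EuclideanSpace.norm_eq]
        congr 1
        refine Finset.sum_congr rfl fun j _ => ?_
        rw [Real.norm_eq_abs, sq_abs]
      constructor
      · intro h
        rw [hnorm]
        calc Real.sqrt (∑ j, (y j) ^ 2) ≤ Real.sqrt (r ^ 2) := Real.sqrt_le_sqrt h
          _ = r := Real.sqrt_sq hr.le
      · intro h
        have h0 : 0 ≤ ∑ j, (y j) ^ 2 := Finset.sum_nonneg fun j _ => sq_nonneg _
        have : ∑ j, (y j) ^ 2 = ‖y‖ ^ 2 := by rw [hnorm, Real.sq_sqrt h0]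
        rw [this]
        exact pow_le_pow_left₀ (norm_nonneg _) h 2
    calc volume Bs
        = volume ((MeasurableEquiv.toLp 2 (Fin (d - k) → ℝ)).symm ⁻¹' Bs) :=
          ((EuclideanSpace.volume_preserving_symm_measurableEquiv_toLp _).measure_preimage
            hBmeas.nullMeasurableSet).symm
      _ = volume (Metric.closedBall (0 : EuclideanSpace ℝ (Fin (d - k))) r) := by rw [hpre]
      _ = _ := by
          rw [Measure.addHaar_closedBall' volume _ hr.le, finrank_euclideanSpace_fin]
  -- put everything together
  have hω : volume (Metric.closedBall (0 : EuclideanSpace ℝ (Fin (d - k))) 1) ≠ ⊤ :=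
    measure_closedBall_lt_top.ne
  have h1 : ENNReal.ofReal (Real.sqrt d) ^ k = ENNReal.ofReal ((d : ℝ) ^ ((k : ℝ) / 2)) := by
    rw [← ENNReal.ofReal_pow (Real.sqrt_nonneg _)]
    congr 1
    rw [Real.sqrt_eq_rpow, ← Real.rpow_natCast ((d : ℝ) ^ (1 / 2 : ℝ)) k,
      ← Real.rpow_mul (Nat.cast_nonneg d)]
    congr 1
    ring
  calc volume {x : E | x ∈ unitCube d ∧ Metric.infDist x (f : Set E) ≤ r}
      ≤ volume (φ ⁻¹' (A ×ˢ Bs)) := measure_mono hsub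
    _ = volume (A ×ˢ Bs) :=
        hφ.measure_preimage (hAmeas.prod hBmeas).nullMeasurableSet
    _ = volume A * volume Bs := by rw [Measure.volume_eq_prod, Measure.prod_prod]
    _ = ENNReal.ofReal ((d : ℝ) ^ ((k : ℝ) / 2)) *
        (ENNReal.ofReal (r ^ (d - k)) *
          volume (Metric.closedBall (0 : EuclideanSpace ℝ (Fin (d - k))) 1)) := by
        rw [hA, hBvol, h1]
    _ = ENNReal.ofReal ((d : ℝ) ^ ((k : ℝ) / 2) *
        (volume (Metric.closedBall (0 : EuclideanSpace ℝ (Fin (d - k))) 1)).toReal *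
        r ^ (d - k)) := by
        rw [ENNReal.ofReal_mul (by positivity), ENNReal.ofReal_mul (by positivity),
          ENNReal.ofReal_toReal hω]
        ring
end
end

section
/- Every compact convex set K ⊆ ℝ^d with nonempty interior contains an ellipsoid E ⊆ K with vol(E) ≥ vol(K)/d^d. -/
open MeasureTheory

noncomputable section

/-- An ellipsoid in `ℝ^d`: the image of the closed Euclidean unit ball under an invertible
affine transformation. -/
def IsEllipsoid (d : ℕ) (E : Set (EuclideanSpace ℝ (Fin d))) : Prop :=
  ∃ A : EuclideanSpace ℝ (Fin d) ≃ᵃ[ℝ] EuclideanSpace ℝ (Fin d),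
    E = A '' Metric.closedBall 0 1

open scoped RealInnerProductSpace
open Metric Set Module

lemma john_arith {h σ s : ℝ} (hh : 1 < h) (hσ : 0 < σ) (hσ1 : σ < 1)
    (hσ2 : σ < (h - 1) / 2) (hs : -1 ≤ s) (hs1 : s ≤ 1) :
    σ * s + Real.sqrt ((1 + σ) ^ 2 * s ^ 2 + (1 - 2 * σ / (h - 1)) * (1 - s ^ 2))
      ≤ max 1 (h * s) := by
  have hh0 : 0 < h := by linarith
  have hh1 : 0 < h - 1 := by linarith
  have hb2 : 0 < 1 - 2 * σ / (h - 1) := by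
    rw [sub_pos, div_lt_one hh1]; linarith
  rcases le_or_gt s (1 / h) with hcase | hcase
  · -- bound by 1
    refine le_trans ?_ (le_max_left _ _)
    have hhs1 : h * s ≤ 1 := by
      have := mul_le_mul_of_nonneg_left hcase hh0.le
      rwa [mul_one_div_cancel hh0.ne'] at this
    have h1 : 0 < 1 - σ * s := by nlinarith
    have hkey : (1 + σ) ^ 2 * s ^ 2 + (1 - 2 * σ / (h - 1)) * (1 - s ^ 2) ≤ (1 - σ * s) ^ 2 := by
      have e1 : (1 - σ * s) ^ 2 - ((1 + σ) ^ 2 * s ^ 2 + (1 - 2 * σ / (h - 1)) * (1 - s ^ 2))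
          = (2 * σ / (h - 1)) * (1 + s) * (1 - h * s) := by
        field_simp
        ring
      nlinarith [mul_nonneg (mul_nonneg (le_of_lt (div_pos (by linarith : (0:ℝ) < 2*σ) hh1))
        (by linarith : (0:ℝ) ≤ 1 + s)) (by linarith : (0:ℝ) ≤ 1 - h * s)]
    have := Real.sqrt_le_sqrt hkey
    rw [Real.sqrt_sq h1.le] at this
    linarith
  · -- bound by h * s
    refine le_trans ?_ (le_max_right _ _)
    have hs0 : 0 < s := lt_trans (by positivity) hcase
    have hhs1 : 1 ≤ h * s := by
      have := mul_le_mul_of_nonneg_left hcase.le hh0.le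
      rwa [mul_one_div_cancel hh0.ne'] at this
    have hhs : 0 ≤ (h - σ) * s := by nlinarith
    have hkey : (1 + σ) ^ 2 * s ^ 2 + (1 - 2 * σ / (h - 1)) * (1 - s ^ 2) ≤ ((h - σ) * s) ^ 2 := by
      have e1 : ((h - σ) * s) ^ 2 - ((1 + σ) ^ 2 * s ^ 2 + (1 - 2 * σ / (h - 1)) * (1 - s ^ 2))
          = (1 - 2 * σ / (h - 1)) * (h * s - 1) * (h * s + 1) := by
        field_simp
        ring
      nlinarith [mul_nonneg (mul_nonneg hb2.le (by linarith : (0:ℝ) ≤ h * s - 1))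
        (by linarith : (0:ℝ) ≤ h * s + 1)]
    have := Real.sqrt_le_sqrt hkey
    rw [Real.sqrt_sq hhs] at this
    nlinarith

lemma john_gain {d : ℕ} (hd : 1 ≤ d) {h : ℝ} (hh : (d : ℝ) < h) :
    ∃ σ : ℝ, 0 < σ ∧ σ < 1 ∧ σ < (h - 1) / 2 ∧
      1 < (1 + σ) ^ 2 * (1 - 2 * σ / (h - 1)) ^ (d - 1) := by
  have hd1 : (1 : ℝ) ≤ d := by exact_mod_cast hd
  have hh1 : 0 < h - 1 := by linarith
  set c : ℝ := 2 * ((d : ℝ) - 1) / (h - 1) with hc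
  have hc0 : 0 ≤ c := by
    apply div_nonneg _ hh1.le; linarith
  have hc2 : c < 2 := by
    rw [hc, div_lt_iff₀ hh1]; linarith
  refine ⟨min ((2 - c) / 12) (min ((h - 1) / 4) (1 / 2)), ?_, ?_, ?_, ?_⟩
  · exact lt_min (by linarith) (lt_min (by linarith) (by norm_num))
  · calc min ((2-c)/12) (min ((h-1)/4) (1/2)) ≤ 1/2 := le_trans (min_le_right _ _) (min_le_right _ _)
      _ < 1 := by norm_num
  · calc min ((2-c)/12) (min ((h-1)/4) (1/2)) ≤ (h-1)/4 := le_trans (min_le_right _ _) (min_le_left _ _)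
      _ < (h-1)/2 := by linarith
  · set σ := min ((2 - c) / 12) (min ((h - 1) / 4) (1 / 2)) with hσdef
    have hσ0 : 0 < σ := lt_min (by linarith) (lt_min (by linarith) (by norm_num))
    have hσa : σ ≤ (2 - c) / 12 := min_le_left _ _
    have hσb : σ ≤ (h - 1) / 4 := le_trans (min_le_right _ _) (min_le_left _ _)
    have hσc : σ ≤ 1 / 2 := le_trans (min_le_right _ _) (min_le_right _ _)
    -- Bernoulli
    have hbern : 1 - c * σ ≤ (1 - 2 * σ / (h - 1)) ^ (d - 1) := by
      have h2 : (-2 : ℝ) ≤ -(2 * σ / (h - 1)) := by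
        have : 2 * σ / (h - 1) ≤ 2 := by
          rw [div_le_iff₀ hh1]; linarith
        linarith
      have := one_add_mul_le_pow h2 (d - 1)
      have hcast : ((d - 1 : ℕ) : ℝ) = (d : ℝ) - 1 := by
        have := Nat.cast_sub hd (R := ℝ); simpa using this
      calc 1 - c * σ = 1 + ((d - 1 : ℕ) : ℝ) * (-(2 * σ / (h - 1))) := by
            rw [hcast, hc]; field_simp; ring
        _ ≤ (1 + -(2 * σ / (h - 1))) ^ (d - 1) := this
        _ = (1 - 2 * σ / (h - 1)) ^ (d - 1) := by ring_nf
    have hmain : 1 < (1 + σ) ^ 2 * (1 - c * σ) := by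
      have h12 : 12 * σ ≤ 2 - c := by linarith [hσa]
      have hsq : 0 < σ ^ 2 := by positivity
      have hcube : 0 ≤ σ ^ 3 := by positivity
      nlinarith [mul_le_mul_of_nonneg_right h12 hsq.le,
        mul_le_mul_of_nonneg_right hc2.le hcube,
        mul_le_mul_of_nonneg_right hc2.le hsq.le,
        mul_le_mul_of_nonneg_right hσc (mul_pos hσ0 hσ0).le, hcube, hsq]
    calc (1:ℝ) < (1 + σ) ^ 2 * (1 - c * σ) := hmain
      _ ≤ (1 + σ) ^ 2 * (1 - 2 * σ / (h - 1)) ^ (d - 1) := by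
          apply mul_le_mul_of_nonneg_left hbern (by positivity)

open scoped RealInnerProductSpace
open Module

noncomputable def projU {d : ℕ} (u : EuclideanSpace ℝ (Fin d)) :
    EuclideanSpace ℝ (Fin d) →ₗ[ℝ] EuclideanSpace ℝ (Fin d) :=
  (innerₗ (EuclideanSpace ℝ (Fin d)) u).smulRight u

lemma projU_apply {d : ℕ} (u x : EuclideanSpace ℝ (Fin d)) :
    projU u x = ⟪u, x⟫ • u := rfl

noncomputable def mapAB {d : ℕ} (u : EuclideanSpace ℝ (Fin d)) (a b : ℝ) :
    EuclideanSpace ℝ (Fin d) →ₗ[ℝ] EuclideanSpace ℝ (Fin d) :=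
  b • LinearMap.id + (a - b) • projU u

lemma mapAB_apply {d : ℕ} (u x : EuclideanSpace ℝ (Fin d)) (a b : ℝ) :
    mapAB u a b x = b • x + ((a - b) * ⟪u, x⟫) • u := by
  show b • x + (a - b) • ⟪u, x⟫ • u = _
  rw [smul_smul]

lemma exists_onb {d : ℕ} (hd : 0 < d) (u : EuclideanSpace ℝ (Fin d)) (hu : ‖u‖ = 1) :
    ∃ B : OrthonormalBasis (Fin d) ℝ (EuclideanSpace ℝ (Fin d)),
      B ⟨0, hd⟩ = u := by
  have hcard : finrank ℝ (EuclideanSpace ℝ (Fin d)) = Fintype.card (Fin d) := by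
    simp
  have horth : Orthonormal ℝ (({⟨0, hd⟩} : Set (Fin d)).restrict (fun _ => u)) := by
    constructor
    · intro i; exact hu
    · intro i j hij
      exact absurd (Subsingleton.elim i j) hij
  obtain ⟨B, hB⟩ := Orthonormal.exists_orthonormalBasis_extension_of_card_eq hcard horth
  exact ⟨B, hB _ rfl⟩

lemma det_mapAB {d : ℕ} (hd : 0 < d) (u : EuclideanSpace ℝ (Fin d)) (hu : ‖u‖ = 1)
    (a b : ℝ) : LinearMap.det (mapAB u a b) = a * b ^ (d - 1) := by
  obtain ⟨B, hB⟩ := exists_onb hd u hu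
  set i0 : Fin d := ⟨0, hd⟩
  have hmat : LinearMap.toMatrix B.toBasis B.toBasis (mapAB u a b)
      = Matrix.diagonal (fun j => if j = i0 then a else b) := by
    ext i j
    have hinner : ⟪u, B j⟫ = if j = i0 then 1 else 0 := by
      rcases eq_or_ne j i0 with rfl | hj
      · rw [if_pos rfl, ← hB, real_inner_self_eq_norm_sq, hB, hu]; norm_num
      · rw [if_neg hj, ← hB]
        exact B.orthonormal.2 (fun h => hj h.symm)
    have key : (mapAB u a b) (B j) = (if j = i0 then a else b) • B j := by
      rw [mapAB_apply, hinner]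
      rcases eq_or_ne j i0 with rfl | hj
      · rw [if_pos rfl, if_pos rfl, hB]
        module
      · rw [if_neg hj, if_neg hj]
        simp
    rw [LinearMap.toMatrix_apply, OrthonormalBasis.coe_toBasis, key, _root_.map_smul,
      ← OrthonormalBasis.coe_toBasis B, Basis.repr_self]
    rcases eq_or_ne i j with rfl | hij
    · simp only [Matrix.diagonal_apply_eq]
      split_ifs <;> simp
    · rw [Matrix.diagonal_apply_ne _ hij]
      split_ifs <;> simp [Finsupp.single_eq_of_ne' (Ne.symm hij)]
  rw [← LinearMap.det_toMatrix B.toBasis, hmat, Matrix.det_diagonal]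
  rw [Finset.prod_eq_mul_prod_sdiff_singleton_of_mem (Finset.mem_univ i0), if_pos rfl]
  congr 1
  rw [Finset.prod_congr rfl (fun x hx => if_neg (by
    rcases Finset.mem_sdiff.1 hx with ⟨-, hx2⟩
    simpa using hx2)), Finset.prod_const]
  congr 1
  rw [Finset.card_sdiff_of_subset (by simp)]
  simp

lemma two_cs (p q r w : ℝ) : p * r + q * w ≤ Real.sqrt ((p^2 + q^2) * (r^2 + w^2)) := by
  rcases le_or_gt (p * r + q * w) 0 with h | h
  · exact h.trans (Real.sqrt_nonneg _)
  · rw [show (p^2+q^2) * (r^2+w^2) = (p*r+q*w)^2 + (p*w-q*r)^2 by ring]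
    calc p*r+q*w = Real.sqrt ((p*r+q*w)^2) := (Real.sqrt_sq h.le).symm
      _ ≤ _ := Real.sqrt_le_sqrt (by nlinarith [sq_nonneg (p*w-q*r)])

lemma inner_bound {d : ℕ} (u v x : EuclideanSpace ℝ (Fin d)) (hu : ‖u‖ = 1) (hv : ‖v‖ = 1)
    (hx : ‖x‖ ≤ 1) {a b : ℝ} (hb : 0 ≤ b) :
    b * ⟪v, x⟫ + (a - b) * ⟪u, x⟫ * ⟪v, u⟫
      ≤ Real.sqrt (a^2 * ⟪v, u⟫^2 + b^2 * (1 - ⟪v, u⟫^2)) := by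
  set s := ⟪v, u⟫ with hs
  set t := ⟪u, x⟫ with ht
  set w := v - s • u with hw
  have hs1 : s^2 ≤ 1 := by
    have := abs_real_inner_le_norm v u
    rw [hv, hu] at this
    nlinarith [abs_nonneg ⟪v,u⟫, sq_abs ⟪v,u⟫]
  have hwu : ⟪w, u⟫ = 0 := by
    rw [hw, inner_sub_left, real_inner_smul_left, ← hs,
      real_inner_self_eq_norm_sq, hu]
    ring
  have hwn : ‖w‖^2 = 1 - s^2 := by
    rw [hw, norm_sub_sq_real, real_inner_smul_right, norm_smul, hv, hu, ← hs,
      Real.norm_eq_abs, mul_pow, sq_abs]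
    ring
  have hvx : ⟪v, x⟫ = s * t + ⟪w, x⟫ := by
    rw [hw, inner_sub_left, real_inner_smul_left, ← ht]
    ring
  set X := ‖x - t • u‖ with hX
  have hX2 : t^2 + X^2 = ‖x‖^2 := by
    rw [hX, norm_sub_sq_real, real_inner_smul_right, real_inner_comm u x, ← ht,
      norm_smul, hu, Real.norm_eq_abs, mul_pow, sq_abs]
    ring
  have hwx : ⟪w, x⟫ ≤ ‖w‖ * X := by
    have h1 : ⟪w, x⟫ = ⟪w, x - t • u⟫ := by
      rw [inner_sub_right, real_inner_smul_right, hwu]; ring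
    rw [h1]
    exact real_inner_le_norm _ _
  calc b * ⟪v, x⟫ + (a - b) * t * s = (a*s) * t + b * ⟪w, x⟫ := by rw [hvx]; ring
    _ ≤ (a*s) * t + (b*‖w‖) * X := by nlinarith [mul_le_mul_of_nonneg_left hwx hb]
    _ ≤ Real.sqrt (((a*s)^2 + (b*‖w‖)^2) * (t^2 + X^2)) := two_cs _ _ _ _
    _ = Real.sqrt ((a^2*s^2 + b^2*(1-s^2)) * ‖x‖^2) := by
        rw [mul_pow, mul_pow, hwn, hX2]
    _ ≤ Real.sqrt (a^2*s^2 + b^2*(1-s^2)) := by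
        apply Real.sqrt_le_sqrt
        have hA : 0 ≤ a^2*s^2 + b^2*(1-s^2) := by nlinarith [sq_nonneg (a*s), sq_nonneg b]
        have hx2 : ‖x‖^2 ≤ 1 := by nlinarith [norm_nonneg x]
        nlinarith

lemma mem_hull {d : ℕ} (hd : 1 ≤ d) (u : EuclideanSpace ℝ (Fin d)) (hu : ‖u‖ = 1)
    {h σ : ℝ} (hh : (d : ℝ) < h) (hσ : 0 < σ) (hσ1 : σ < 1) (hσ2 : σ < (h - 1) / 2)
    {x : EuclideanSpace ℝ (Fin d)} (hx : x ∈ closedBall (0 : EuclideanSpace ℝ (Fin d)) 1) :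
    mapAB u (1 + σ) (Real.sqrt (1 - 2 * σ / (h - 1))) x + σ • u ∈
      closure (convexHull ℝ (closedBall 0 1 ∪ {h • u})) := by
  have hd1 : (1 : ℝ) ≤ d := by exact_mod_cast hd
  have hh1 : 1 < h := lt_of_le_of_lt hd1 hh
  have hh0 : 0 < h - 1 := by linarith
  set a : ℝ := 1 + σ with ha
  set b : ℝ := Real.sqrt (1 - 2 * σ / (h - 1)) with hbdef
  have hb2pos : 0 ≤ 1 - 2 * σ / (h - 1) := by
    rw [sub_nonneg, div_le_one hh0]; linarith
  have hb2 : b ^ 2 = 1 - 2 * σ / (h - 1) := Real.sq_sqrt hb2pos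
  have hb0 : 0 ≤ b := Real.sqrt_nonneg _
  set y := mapAB u a b x + σ • u with hy
  by_contra hyC
  set C := closure (convexHull ℝ (closedBall (0 : EuclideanSpace ℝ (Fin d)) 1 ∪ {h • u}))
    with hC
  have hsub : closedBall (0 : EuclideanSpace ℝ (Fin d)) 1 ∪ {h • u} ⊆ C :=
    (subset_convexHull ℝ _).trans subset_closure
  obtain ⟨f, r, hfr, hr⟩ := geometric_hahn_banach_closed_point
    ((convex_convexHull ℝ _).closure) isClosed_closure hyC
  set v₀ := (InnerProductSpace.toDual ℝ (EuclideanSpace ℝ (Fin d))).symm f with hv₀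
  have hv₀app : ∀ z, ⟪v₀, z⟫ = f z := fun z => InnerProductSpace.toDual_symm_apply
  have h0C : (0 : EuclideanSpace ℝ (Fin d)) ∈ C :=
    hsub (Or.inl (by simp))
  have hfy : 0 < f y := by
    have := hfr 0 h0C
    simp at this
    linarith [hr]
  have hv₀ne : v₀ ≠ 0 := by
    intro h0
    rw [← hv₀app y, h0] at hfy
    simp at hfy
  have hv₀n : 0 < ‖v₀‖ := norm_pos_iff.2 hv₀ne
  set v := ‖v₀‖⁻¹ • v₀ with hv
  have hvn : ‖v‖ = 1 := by
    rw [hv, norm_smul, norm_inv, norm_norm, inv_mul_cancel₀ hv₀n.ne']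
  have hsep : ∀ z ∈ C, ⟪v, z⟫ < ⟪v, y⟫ := by
    intro z hz
    rw [hv, real_inner_smul_left, real_inner_smul_left, hv₀app, hv₀app]
    have h1 := hfr z hz
    have h2 := hr
    have : f z < f y := lt_trans h1 h2
    exact mul_lt_mul_of_pos_left this (by positivity)
  set s := ⟪v, u⟫ with hs
  have hs_abs : |s| ≤ 1 := by
    have := abs_real_inner_le_norm v u
    rw [hvn, hu, one_mul] at this
    rw [hs]; exact this
  have hs1 : -1 ≤ s := neg_le_of_abs_le hs_abs
  have hs2 : s ≤ 1 := le_of_abs_le hs_abs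
  -- lower bounds on ⟪v, y⟫
  have hvy1 : 1 < ⟪v, y⟫ := by
    have hvC : v ∈ C := hsub (Or.inl (mem_closedBall_zero_iff.2 hvn.le))
    have := hsep v hvC
    rwa [real_inner_self_eq_norm_sq, hvn, one_pow] at this
  have hvy2 : h * s < ⟪v, y⟫ := by
    have hqC : h • u ∈ C := hsub (Or.inr rfl)
    have := hsep _ hqC
    rwa [real_inner_smul_right, ← hs] at this
  -- upper bound
  have hupper : ⟪v, y⟫ ≤ σ * s + Real.sqrt (a^2 * s^2 + b^2 * (1 - s^2)) := by
    have hxe : ⟪v, y⟫ = (b * ⟪v, x⟫ + (a - b) * ⟪u, x⟫ * ⟪v, u⟫) + σ * s := by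
      rw [hy, inner_add_right, mapAB_apply, inner_add_right, real_inner_smul_right,
        real_inner_smul_right, real_inner_smul_right, ← hs]
    rw [hxe]
    have := inner_bound u v x hu hvn (by rwa [mem_closedBall_zero_iff] at hx) hb0 (a := a)
    rw [← hs] at this
    linarith
  rw [hb2, ha] at hupper
  have harith := john_arith hh1 hσ hσ1 hσ2 hs1 hs2
  have : max 1 (h * s) < ⟪v, y⟫ := max_lt hvy1 hvy2
  linarith

set_option maxHeartbeats 1000000

/-- John's theorem (volume form): every compact convex set `K ⊆ ℝ^d` with nonempty interior
contains an ellipsoid of volume at least `vol(K)/d^d`. -/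
theorem john_volume (d : ℕ) (K : Set (EuclideanSpace ℝ (Fin d)))
    (hK : IsCompact K) (hconv : Convex ℝ K) (hint : (interior K).Nonempty) :
    ∃ E : Set (EuclideanSpace ℝ (Fin d)), IsEllipsoid d E ∧ E ⊆ K ∧
      volume K / (d : ENNReal) ^ d ≤ volume E := by
  rcases Nat.eq_zero_or_pos d with rfl | hd
  · -- d = 0 : trivial
    refine ⟨Metric.closedBall 0 1, ⟨AffineEquiv.refl ℝ _, by simp⟩, ?_, ?_⟩
    · intro x hx
      obtain ⟨k, hk⟩ := hint
      have : x = k := Subsingleton.elim x k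
      exact this ▸ interior_subset hk
    · simp only [pow_zero, div_one]
      apply measure_mono
      intro x hx
      have : x = (0 : EuclideanSpace ℝ (Fin 0)) := Subsingleton.elim _ _
      simp [this]
  · -- main case
    have hW : True := trivial
    set B₁ : Set (EuclideanSpace ℝ (Fin d)) := closedBall 0 1 with hB₁
    set S : Set ((EuclideanSpace ℝ (Fin d) →L[ℝ] EuclideanSpace ℝ (Fin d)) × EuclideanSpace ℝ (Fin d)) := {p | ∀ x ∈ B₁, p.1 x + p.2 ∈ K} with hS
    -- S is closed
    have hSclosed : IsClosed S := by
      have : S = ⋂ x ∈ B₁, {p : (EuclideanSpace ℝ (Fin d) →L[ℝ] EuclideanSpace ℝ (Fin d)) × EuclideanSpace ℝ (Fin d) | p.1 x + p.2 ∈ K} := by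
        ext p; simp [hS]
      rw [this]
      refine isClosed_biInter fun x _ => IsClosed.preimage ?_ hK.isClosed
      exact ((ContinuousLinearMap.apply ℝ (EuclideanSpace ℝ (Fin d)) x).continuous.comp continuous_fst).add
        continuous_snd
    -- S is bounded
    obtain ⟨R, hR⟩ := hK.isBounded.subset_closedBall 0
    have hSbdd : Bornology.IsBounded S := by
      rw [Metric.isBounded_iff_subset_closedBall 0]
      refine ⟨max (2 * R + R) R, fun p hp => ?_⟩
      have hp2 : ‖p.2‖ ≤ R := by
        have h0 : p.1 0 + p.2 ∈ K := hp 0 (by simp [hB₁])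
        have := hR h0
        rw [mem_closedBall_zero_iff] at this
        simpa using this
      have hp1 : ‖p.1‖ ≤ 2 * R + R := by
        apply ContinuousLinearMap.opNorm_le_of_unit_norm
        · have h0R : 0 ≤ R := le_trans (norm_nonneg _) hp2
          linarith
        · intro x hx
          have hxB : x ∈ B₁ := by simp [hB₁, hx.le]
          have h1 : p.1 x + p.2 ∈ K := hp x hxB
          have h2 := hR h1
          rw [mem_closedBall_zero_iff] at h2
          calc ‖p.1 x‖ = ‖(p.1 x + p.2) - p.2‖ := by rw [add_sub_cancel_right]
            _ ≤ ‖p.1 x + p.2‖ + ‖p.2‖ := norm_sub_le _ _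
            _ ≤ R + R := add_le_add h2 hp2
            _ ≤ 2 * R + R := by linarith [le_trans (norm_nonneg _) hp2]
      rw [mem_closedBall_zero_iff]
      rw [Prod.norm_def]
      exact max_le_max hp1 hp2
    have hScompact : IsCompact S := Metric.isCompact_of_isClosed_isBounded hSclosed hSbdd
    -- S contains an element with positive determinant
    obtain ⟨x₀, hx₀⟩ := hint
    obtain ⟨r, hr0, hball⟩ := Metric.isOpen_iff.1 isOpen_interior x₀ hx₀
    set p₀ : (EuclideanSpace ℝ (Fin d) →L[ℝ] EuclideanSpace ℝ (Fin d)) × EuclideanSpace ℝ (Fin d) := ((r/2) • ContinuousLinearMap.id ℝ (EuclideanSpace ℝ (Fin d)), x₀) with hp₀def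
    have hp₀S : p₀ ∈ S := by
      intro x hx
      apply interior_subset
      apply hball
      rw [mem_ball_iff_norm]
      simp only [hp₀def, ContinuousLinearMap.smul_apply, ContinuousLinearMap.id_apply]
      rw [add_sub_cancel_right, norm_smul]
      rw [mem_closedBall_zero_iff] at hx
      have : ‖(r/2 : ℝ)‖ = r/2 := by
        rw [Real.norm_eq_abs, abs_of_pos (by linarith)]
      rw [this]
      nlinarith
    have hdetp₀ : |LinearMap.det ((p₀.1 : EuclideanSpace ℝ (Fin d) →L[ℝ] EuclideanSpace ℝ (Fin d)) : EuclideanSpace ℝ (Fin d) →ₗ[ℝ] EuclideanSpace ℝ (Fin d))| = (r/2)^d := by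
      simp only [hp₀def]
      rw [ContinuousLinearMap.coe_smul, ContinuousLinearMap.coe_id, LinearMap.det_smul,
        LinearMap.det_id, mul_one, finrank_euclideanSpace, Fintype.card_fin, abs_pow,
        abs_of_pos (by linarith : (0:ℝ) < r/2)]
    -- maximize the determinant
    have hcont : Continuous fun p : (EuclideanSpace ℝ (Fin d) →L[ℝ] EuclideanSpace ℝ (Fin d)) × EuclideanSpace ℝ (Fin d) =>
        |LinearMap.det ((p.1 : EuclideanSpace ℝ (Fin d) →L[ℝ] EuclideanSpace ℝ (Fin d)) : EuclideanSpace ℝ (Fin d) →ₗ[ℝ] EuclideanSpace ℝ (Fin d))| :=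
      (ContinuousLinearMap.continuous_det.comp continuous_fst).abs
    obtain ⟨q₀, hq₀S, hq₀max⟩ := hScompact.exists_isMaxOn ⟨p₀, hp₀S⟩ hcont.continuousOn
    set f₀ := q₀.1 with hf₀def
    set c₀ := q₀.2 with hc₀def
    set D := |LinearMap.det ((f₀ : EuclideanSpace ℝ (Fin d) →L[ℝ] EuclideanSpace ℝ (Fin d)) : EuclideanSpace ℝ (Fin d) →ₗ[ℝ] EuclideanSpace ℝ (Fin d))| with hDdef
    have hq₀mem : ∀ x ∈ B₁, f₀ x + c₀ ∈ K := hq₀S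
    have hD : (r/2)^d ≤ D := by
      have := hq₀max hp₀S
      simp only [Set.mem_setOf_eq] at this
      rwa [hdetp₀] at this
    have hDpos : 0 < D := lt_of_lt_of_le (by positivity) hD
    have hdet0 : LinearMap.det ((f₀ : EuclideanSpace ℝ (Fin d) →L[ℝ] EuclideanSpace ℝ (Fin d)) : EuclideanSpace ℝ (Fin d) →ₗ[ℝ] EuclideanSpace ℝ (Fin d)) ≠ 0 := by
      intro hzero
      rw [hDdef, hzero, abs_zero] at hDpos
      exact lt_irrefl _ hDpos
    set e := LinearMap.equivOfDetNeZero _ hdet0 with hedef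
    have he : ∀ z, e z = f₀ z := by
      intro z
      have : (e : EuclideanSpace ℝ (Fin d) →ₗ[ℝ] EuclideanSpace ℝ (Fin d)) = (f₀ : EuclideanSpace ℝ (Fin d) →ₗ[ℝ] EuclideanSpace ℝ (Fin d)) :=
        LinearEquiv.coe_ofIsUnitDet _
      exact DFunLike.congr_fun this z
    -- John's maximality claim
    have hjohn : ∀ p ∈ K, ‖e.symm (p - c₀)‖ ≤ (d : ℝ) := by
      intro p hp
      by_contra hcon
      push_neg at hcon
      set q := e.symm (p - c₀) with hqdef
      set h : ℝ := ‖q‖ with hhdef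
      have hh : (d : ℝ) < h := hcon
      have hd1 : (1:ℝ) ≤ d := by exact_mod_cast hd
      have hq0 : h ≠ 0 := by intro h0; rw [h0] at hh; linarith
      set u := h⁻¹ • q with hudef
      have hu : ‖u‖ = 1 := by
        rw [hudef, norm_smul, norm_inv, Real.norm_eq_abs, hhdef, abs_norm,
          inv_mul_cancel₀ hq0]
      have hq : h • u = q := by
        rw [hudef, smul_smul, mul_inv_cancel₀ hq0, one_smul]
      obtain ⟨σ, hσ0, hσ1, hσ2, hσgain⟩ := john_gain hd hh
      set a : ℝ := 1 + σ with hadef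
      set b : ℝ := Real.sqrt (1 - 2 * σ / (h - 1)) with hbdef
      have hh1 : (1:ℝ) < h := lt_of_le_of_lt hd1 hh
      have hb2nn : 0 ≤ 1 - 2 * σ / (h - 1) := by
        rw [sub_nonneg, div_le_one (by linarith)]
        linarith
      have hb2 : b ^ 2 = 1 - 2 * σ / (h - 1) := Real.sq_sqrt hb2nn
      have hb0 : 0 ≤ b := Real.sqrt_nonneg _
      set F : EuclideanSpace ℝ (Fin d) →L[ℝ] EuclideanSpace ℝ (Fin d) :=
        f₀.comp (LinearMap.toContinuousLinearMap (mapAB u a b)) with hFdef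
      set c : EuclideanSpace ℝ (Fin d) := f₀ (σ • u) + c₀ with hcdef
      have hFS : (F, c) ∈ S := by
        intro x hx
        show F x + c ∈ K
        have hz := mem_hull hd u hu hh hσ0 hσ1 hσ2 hx
        have hsubset : closure (convexHull ℝ (B₁ ∪ {h • u})) ⊆
            {w : EuclideanSpace ℝ (Fin d) | f₀ w + c₀ ∈ K} := by
          have hconvT : Convex ℝ {w : EuclideanSpace ℝ (Fin d) | f₀ w + c₀ ∈ K} := by
            intro w1 hw1 w2 hw2 t1 t2 ht1 ht2 hsum
            show f₀ (t1 • w1 + t2 • w2) + c₀ ∈ K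
            have heq : f₀ (t1 • w1 + t2 • w2) + c₀
                = t1 • (f₀ w1 + c₀) + t2 • (f₀ w2 + c₀) := by
              rw [map_add, _root_.map_smul, _root_.map_smul, smul_add t1, smul_add t2]
              conv_lhs => rw [show c₀ = t1 • c₀ + t2 • c₀ by rw [← add_smul, hsum, one_smul]]
              abel
            rw [heq]
            exact hconv hw1 hw2 ht1 ht2 hsum
          have hclosedT : IsClosed {w : EuclideanSpace ℝ (Fin d) | f₀ w + c₀ ∈ K} :=
            IsClosed.preimage (f₀.continuous.add continuous_const) hK.isClosed
          refine closure_minimal (convexHull_min ?_ hconvT) hclosedT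
          rintro w (hw | hw)
          · exact hq₀mem w hw
          · rw [Set.mem_singleton_iff] at hw
            subst hw
            show f₀ (h • u) + c₀ ∈ K
            rw [hq]
            have hfq : f₀ q = p - c₀ := by
              rw [hqdef, ← he]
              exact e.apply_symm_apply _
            rw [hfq, sub_add_cancel]
            exact hp
        have := hsubset hz
        simp only [Set.mem_setOf_eq] at this
        have hFx : F x + c = f₀ (mapAB u a b x + σ • u) + c₀ := by
          rw [hFdef, hcdef]
          simp only [ContinuousLinearMap.comp_apply, LinearMap.coe_toContinuousLinearMap']
          rw [map_add]
          abel
        rw [hFx]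
        exact this
      -- contradiction with maximality
      have hdetF : |LinearMap.det ((F : EuclideanSpace ℝ (Fin d) →L[ℝ] EuclideanSpace ℝ (Fin d)) : EuclideanSpace ℝ (Fin d) →ₗ[ℝ] EuclideanSpace ℝ (Fin d))|
          = D * (a * b ^ (d - 1)) := by
        rw [hFdef]
        rw [ContinuousLinearMap.toLinearMap_comp, LinearMap.coe_toContinuousLinearMap,
          LinearMap.det_comp, abs_mul, det_mapAB hd u hu a b, ← hDdef]
        congr 1
        rw [abs_of_nonneg (by positivity)]
      have hab : 1 < a * b ^ (d - 1) := by
        have hsq : (a * b ^ (d - 1)) ^ 2 = (1 + σ) ^ 2 * (1 - 2 * σ / (h - 1)) ^ (d - 1) := by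
          rw [mul_pow, ← hb2, hadef, ← pow_mul, mul_comm (d-1) 2, pow_mul]
        have h1 : 1 < (a * b ^ (d - 1)) ^ 2 := by rw [hsq]; exact hσgain
        nlinarith [mul_nonneg (by linarith : (0:ℝ) ≤ a) (pow_nonneg hb0 (d-1))]
      have hle : |LinearMap.det ((F : EuclideanSpace ℝ (Fin d) →L[ℝ] EuclideanSpace ℝ (Fin d)) : EuclideanSpace ℝ (Fin d) →ₗ[ℝ] EuclideanSpace ℝ (Fin d))| ≤ D :=
        hq₀max hFS
      rw [hdetF] at hle
      nlinarith
    -- assemble the ellipsoid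
    set A := e.toAffineEquiv.trans
      (AffineEquiv.constVAdd ℝ (EuclideanSpace ℝ (Fin d)) c₀) with hAdef
    have hA : ∀ z, A z = f₀ z + c₀ := by
      intro z
      rw [hAdef]
      simp only [AffineEquiv.trans_apply, AffineEquiv.constVAdd_apply,
        LinearEquiv.coe_toAffineEquiv]
      rw [he, vadd_eq_add, add_comm]
    refine ⟨A '' B₁, ⟨A, rfl⟩, ?_, ?_⟩
    · rintro _ ⟨x, hx, rfl⟩
      rw [hA]
      exact hq₀mem x hx
    · -- volume bound
      have hvol : ∀ s : Set (EuclideanSpace ℝ (Fin d)),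
          volume (A '' s) = ENNReal.ofReal D * volume s := by
        intro s
        have h1 : A '' s = (fun w => c₀ + w) ''
            (((f₀ : EuclideanSpace ℝ (Fin d) →L[ℝ] EuclideanSpace ℝ (Fin d)) : EuclideanSpace ℝ (Fin d) →ₗ[ℝ] EuclideanSpace ℝ (Fin d)) '' s) := by
          rw [Set.image_image]
          apply Set.image_congr
          intro x _
          rw [hA]
          simp [add_comm]
        have h2 : (fun w => c₀ + w) ''
            (((f₀ : EuclideanSpace ℝ (Fin d) →L[ℝ] EuclideanSpace ℝ (Fin d)) : EuclideanSpace ℝ (Fin d) →ₗ[ℝ] EuclideanSpace ℝ (Fin d)) '' s)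
            = (fun w => -c₀ + w) ⁻¹'
            (((f₀ : EuclideanSpace ℝ (Fin d) →L[ℝ] EuclideanSpace ℝ (Fin d)) : EuclideanSpace ℝ (Fin d) →ₗ[ℝ] EuclideanSpace ℝ (Fin d)) '' s) := by
          ext w
          simp only [Set.mem_image, Set.mem_preimage]
          constructor
          · rintro ⟨y, hy, rfl⟩
            simpa using hy
          · intro hw
            exact ⟨-c₀ + w, hw, by abel⟩
        rw [h1, h2, measure_preimage_add, Measure.addHaar_image_linearMap, hDdef]
      have hKsub : K ⊆ A '' (closedBall 0 (d : ℝ)) := by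
        intro p hp
        refine ⟨e.symm (p - c₀), ?_, ?_⟩
        · rw [mem_closedBall_zero_iff]
          exact hjohn p hp
        · rw [hA, ← he, e.apply_symm_apply]
          abel
      have hvK : volume K ≤ ENNReal.ofReal D *
          (ENNReal.ofReal ((d:ℝ) ^ d) * volume B₁) := by
        calc volume K ≤ volume (A '' (closedBall 0 (d:ℝ))) := measure_mono hKsub
          _ = ENNReal.ofReal D * volume (closedBall (0 : EuclideanSpace ℝ (Fin d)) (d:ℝ)) := hvol _
          _ = ENNReal.ofReal D * (ENNReal.ofReal ((d:ℝ) ^ finrank ℝ (EuclideanSpace ℝ (Fin d))) * volume B₁) := by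
              rw [Measure.addHaar_closedBall' volume 0 (by positivity : (0:ℝ) ≤ (d:ℝ))]
          _ = ENNReal.ofReal D * (ENNReal.ofReal ((d:ℝ) ^ d) * volume B₁) := by
              rw [finrank_euclideanSpace, Fintype.card_fin]
      have hvE : volume (A '' B₁) = ENNReal.ofReal D * volume B₁ := hvol B₁
      have hdd : ENNReal.ofReal ((d:ℝ) ^ d) = (d : ENNReal) ^ d := by
        rw [ENNReal.ofReal_pow (by positivity), ENNReal.ofReal_natCast]
      apply ENNReal.div_le_of_le_mul
      calc volume K ≤ ENNReal.ofReal D * (ENNReal.ofReal ((d:ℝ) ^ d) * volume B₁) := hvK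
        _ = (ENNReal.ofReal D * volume B₁) * ((d:ENNReal) ^ d) := by rw [hdd]; ring
        _ = volume (A '' B₁) * (d:ENNReal) ^ d := by rw [hvE]
end
end

section
/- For every dimension d ≥ 2 there exists a constant C_d > 0 such that for every ε ∈ (0,1) there exists a finite set P ⊆ [0,1]^d with |P| ≤ C_d·ε^{-1}·(log(1/ε))^{d-1} + C_d such that every compact convex set Ξ ⊆ ℝ^d with vol(Ξ ∩ [0,1]^d) ≥ ε contains a point of P; i.e., P is a (0,ε)-net for [0,1]^d. -/
open MeasureTheory

noncomputable section

section WeakNetAuxSection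

open Set ENNReal

namespace WeakNetAux


def cube (n : ℕ) : Set (Fin n → ℝ) := {x | ∀ i, x i ∈ Set.Icc (0:ℝ) 1}

lemma cube_eq_pi (n : ℕ) : cube n = Set.pi Set.univ (fun _ : Fin n => Set.Icc (0:ℝ) 1) := by
  ext x; simp [cube, Set.mem_pi, Pi.le_def, forall_and]

lemma isCompact_cube (n : ℕ) : IsCompact (cube n) := by
  rw [cube_eq_pi]; exact isCompact_univ_pi (fun _ => isCompact_Icc)

lemma volume_cube (n : ℕ) : volume (cube n) = 1 := by
  rw [cube_eq_pi, volume_pi_pi]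
  simp [Real.volume_Icc]

lemma exists_Icc_image {n : ℕ} {K : Set (Fin n → ℝ)} (hK : IsCompact K)
    (hKc : Convex ℝ K) (hne : K.Nonempty) (i : Fin n) :
    ∃ a b : ℝ, a ≤ b ∧ (fun x => x i) '' K = Set.Icc a b := by
  set J := (fun x : Fin n → ℝ => x i) '' K with hJdef
  have hJcomp : IsCompact J := hK.image (continuous_apply i)
  have hJne : J.Nonempty := hne.image _
  have hJconv : Convex ℝ J := hKc.linear_image (LinearMap.proj i)
  refine ⟨sInf J, sSup J, ?_, ?_⟩
  · exact csInf_le_csSup hJne hJcomp.bddBelow hJcomp.bddAbove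
  · apply Set.Subset.antisymm
    · intro t ht
      exact ⟨csInf_le hJcomp.bddBelow ht, le_csSup hJcomp.bddAbove ht⟩
    · exact hJconv.ordConnected.out (hJcomp.sInf_mem hJne) (hJcomp.sSup_mem hJne)

lemma volume_eq_lintegral_slice {m : ℕ} {K : Set (Fin (m+1) → ℝ)} (hK : MeasurableSet K) :
    volume K = ∫⁻ t : ℝ, volume {y : Fin m → ℝ | Fin.cons t y ∈ K} := by
  have hp := (volume_preserving_piFinSuccAbove (fun _ : Fin (m+1) => ℝ) 0).symm
  have h1 : volume K = (volume.prod volume)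
      ((MeasurableEquiv.piFinSuccAbove (fun _ : Fin (m+1) => ℝ) 0).symm ⁻¹' K) :=
    (hp.measure_preimage hK.nullMeasurableSet).symm
  rw [h1, Measure.prod_apply (hK.preimage (MeasurableEquiv.piFinSuccAbove _ 0).symm.measurable)]
  congr 1
  funext t
  congr 1
  ext y
  simp only [Set.mem_preimage, Set.mem_setOf_eq, MeasurableEquiv.piFinSuccAbove_symm_apply,
    Fin.insertNthEquiv_zero]
  exact Iff.rfl

lemma slice_measurable {m : ℕ} {K : Set (Fin (m+1) → ℝ)} (hK : MeasurableSet K) :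
    Measurable (fun t : ℝ => volume {y : Fin m → ℝ | Fin.cons t y ∈ K}) := by
  have hK' : MeasurableSet
      ((MeasurableEquiv.piFinSuccAbove (fun _ : Fin (m+1) => ℝ) 0).symm ⁻¹' K) :=
    hK.preimage (MeasurableEquiv.piFinSuccAbove _ 0).symm.measurable
  have h2 := measurable_measure_prodMk_left (ν := (volume : Measure (Fin m → ℝ))) hK'
  convert h2 using 2 with t
  congr 1
  ext y
  simp only [Set.mem_preimage, Set.mem_setOf_eq, MeasurableEquiv.piFinSuccAbove_symm_apply,
    Fin.insertNthEquiv_zero]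
  exact Iff.rfl

lemma smul_cons_add {m : ℕ} (a b t s : ℝ) (y z : Fin m → ℝ) :
    a • (Fin.cons t y : Fin (m+1) → ℝ) + b • (Fin.cons s z : Fin (m+1) → ℝ)
      = (Fin.cons (a*t + b*s) (a • y + b • z) : Fin (m+1) → ℝ) := by
  funext i
  refine Fin.cases ?_ (fun j => ?_) i <;> simp [smul_eq_mul]

lemma slice_lower_bound {m : ℕ} {K : Set (Fin (m+1) → ℝ)} (hKc : Convex ℝ K)
    {t0 t1 : ℝ} {y1 : Fin m → ℝ} (hy1 : Fin.cons t1 y1 ∈ K) :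
    ENNReal.ofReal ((2:ℝ)⁻¹ ^ m) * volume {y : Fin m → ℝ | Fin.cons t0 y ∈ K}
      ≤ volume {y : Fin m → ℝ | Fin.cons ((t0+t1)/2) y ∈ K} := by
  set A := {y : Fin m → ℝ | Fin.cons t0 y ∈ K}
  set B := {y : Fin m → ℝ | Fin.cons ((t0+t1)/2) y ∈ K}
  have himg : (AffineMap.homothety y1 (2⁻¹:ℝ)) '' A ⊆ B := by
    rintro - ⟨y, hy, rfl⟩
    have hcomb := hKc hy hy1 (by norm_num : (0:ℝ) ≤ 2⁻¹) (by norm_num : (0:ℝ) ≤ 2⁻¹) (by norm_num)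
    rw [smul_cons_add] at hcomb
    have : AffineMap.homothety y1 (2⁻¹:ℝ) y = (2⁻¹:ℝ) • y + (2⁻¹:ℝ) • y1 := by
      simp [AffineMap.homothety_apply]
      module
    rw [Set.mem_setOf_eq, this]
    convert hcomb using 2
    ring
  calc ENNReal.ofReal ((2:ℝ)⁻¹ ^ m) * volume A
      = volume ((AffineMap.homothety y1 (2⁻¹:ℝ)) '' A) := by
        rw [Measure.addHaar_image_homothety]
        congr 2
        rw [abs_of_nonneg (by positivity)]
        rw [Module.finrank_fin_fun]
    _ ≤ volume B := measure_mono himg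

lemma slice_props {m : ℕ} {K : Set (Fin (m+1) → ℝ)} (hcomp : IsCompact K)
    (hconv : Convex ℝ K) (hsub : K ⊆ cube (m+1)) (t : ℝ) :
    IsCompact {y : Fin m → ℝ | Fin.cons t y ∈ K} ∧
      Convex ℝ {y : Fin m → ℝ | Fin.cons t y ∈ K} ∧
      {y : Fin m → ℝ | Fin.cons t y ∈ K} ⊆ cube m := by
  have hcont : Continuous (fun y : Fin m → ℝ => (Fin.cons t y : Fin (m+1) → ℝ)) := by
    refine continuous_pi (fun i => ?_)
    refine Fin.cases ?_ (fun j => ?_) i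
    · simpa using continuous_const
    · simpa using continuous_apply j
  have hsubc : {y : Fin m → ℝ | Fin.cons t y ∈ K} ⊆ cube m := by
    intro y hy i
    simpa using hsub hy i.succ
  refine ⟨?_, ?_, hsubc⟩
  · exact (isCompact_cube m).of_isClosed_subset (hcomp.isClosed.preimage hcont) hsubc
  · intro y hy z hz a b ha hb hab
    have := hconv hy hz ha hb hab
    rw [smul_cons_add] at this
    have ht : a * t + b * t = t := by rw [← add_mul, hab, one_mul]
    rwa [ht] at this

lemma mem_cube {n : ℕ} {x : Fin n → ℝ} : x ∈ cube n ↔ ∀ i, x i ∈ Set.Icc (0:ℝ) 1 :=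
  Iff.rfl

lemma step_hit {m : ℕ} {ε : ℝ} (hε : ε ∈ Set.Ioo (0:ℝ) 1)
    {K : Set (Fin (m+1) → ℝ)} (hcomp : IsCompact K) (hconv : Convex ℝ K)
    (hsub : K ⊆ cube (m+1)) (hvol : ENNReal.ofReal ε ≤ volume K) :
    ∃ s : ℕ, s ≤ ⌈Real.logb 2 ε⁻¹⌉₊ ∧ ∃ k : ℕ,
      (k : ℝ) * (ε * 2^s / 8) ≤ 1 ∧
      ENNReal.ofReal ((2⁻¹:ℝ)^(s+m+1)) ≤
        volume {y : Fin m → ℝ | Fin.cons ((k:ℝ) * (ε * 2^s / 8)) y ∈ K} := by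
  classical
  obtain ⟨hε0, hε1⟩ := hε
  set f : ℝ → ℝ≥0∞ := fun t => volume {y : Fin m → ℝ | Fin.cons t y ∈ K} with hfdef
  have hne : K.Nonempty := by
    rcases Set.eq_empty_or_nonempty K with h | h
    · exfalso
      rw [h, measure_empty] at hvol
      exact (ENNReal.ofReal_pos.2 hε0).ne' (le_antisymm hvol (zero_le))
    · exact h
  obtain ⟨a, b, hab, hJ⟩ := exists_Icc_image hcomp hconv hne 0
  have haJ : a ∈ (fun x : Fin (m+1) → ℝ => x 0) '' K := by rw [hJ]; exact ⟨le_rfl, hab⟩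
  have hbJ : b ∈ (fun x : Fin (m+1) → ℝ => x 0) '' K := by rw [hJ]; exact ⟨hab, le_rfl⟩
  have ha0 : 0 ≤ a := by
    obtain ⟨x, hx, hx0⟩ := haJ; rw [← hx0]; exact (hsub hx 0).1
  have hb1 : b ≤ 1 := by
    obtain ⟨x, hx, hx0⟩ := hbJ; rw [← hx0]; exact (hsub hx 0).2
  have hf0 : ∀ t, t ∉ Set.Icc a b → f t = 0 := by
    intro t ht
    have he : {y : Fin m → ℝ | Fin.cons t y ∈ K} = ∅ := by
      rw [Set.eq_empty_iff_forall_notMem]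
      intro y hy
      refine ht ?_
      rw [← hJ]
      exact ⟨Fin.cons t y, hy, by simp⟩
    simp [hfdef, he]
  have hf1 : ∀ t, f t ≤ 1 := by
    intro t
    calc f t ≤ volume (cube m) :=
          measure_mono (slice_props hcomp hconv hsub t).2.2
      _ = 1 := volume_cube m
  set M : ℝ≥0∞ := ⨆ t, f t with hMdef
  have hM1 : M ≤ 1 := iSup_le hf1
  have hkey : ENNReal.ofReal ε ≤ M * ENNReal.ofReal (b - a) := by
    have h1 : volume K = ∫⁻ t, f t := volume_eq_lintegral_slice hcomp.measurableSet
    have h2 : ∀ t, f t ≤ (Set.Icc a b).indicator (fun _ => M) t := by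
      intro t
      by_cases ht : t ∈ Set.Icc a b
      · rw [Set.indicator_of_mem ht]; exact le_iSup f t
      · rw [Set.indicator_of_notMem ht, hf0 t ht]
    calc ENNReal.ofReal ε ≤ volume K := hvol
      _ = ∫⁻ t, f t := h1
      _ ≤ ∫⁻ t, (Set.Icc a b).indicator (fun _ => M) t := lintegral_mono h2
      _ = M * volume (Set.Icc a b) := lintegral_indicator_const measurableSet_Icc M
      _ = M * ENNReal.ofReal (b - a) := by rw [Real.volume_Icc]
  have hεM : ENNReal.ofReal ε ≤ M := by
    refine hkey.trans ?_
    calc M * ENNReal.ofReal (b - a) ≤ M * 1 := by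
          refine _root_.mul_le_mul_right ?_ M
          rw [ENNReal.ofReal_le_one]
          linarith
      _ = M := mul_one M
  have hpS : ENNReal.ofReal ((2⁻¹:ℝ)^(⌈Real.logb 2 ε⁻¹⌉₊ : ℕ)) ≤ M := by
    refine le_trans ?_ hεM
    apply ENNReal.ofReal_le_ofReal
    have hS : Real.logb 2 ε⁻¹ ≤ (⌈Real.logb 2 ε⁻¹⌉₊ : ℝ) := Nat.le_ceil _
    have h2S : ε⁻¹ ≤ (2:ℝ)^(⌈Real.logb 2 ε⁻¹⌉₊ : ℕ) := by
      have h' : (2:ℝ) ^ (Real.logb 2 ε⁻¹) ≤ (2:ℝ) ^ ((⌈Real.logb 2 ε⁻¹⌉₊ : ℝ)) :=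
        (Real.rpow_le_rpow_left_iff one_lt_two).2 hS
      rwa [Real.rpow_logb two_pos (by norm_num) (by positivity), Real.rpow_natCast] at h'
    rw [inv_pow, inv_le_comm₀ (by positivity) hε0]
    exact h2S
  have hp : ∃ s : ℕ, ENNReal.ofReal ((2⁻¹:ℝ)^s) ≤ M := ⟨_, hpS⟩
  set s := Nat.find hp with hsdef
  have hps : ENNReal.ofReal ((2⁻¹:ℝ)^s) ≤ M := Nat.find_spec hp
  have hsle : s ≤ ⌈Real.logb 2 ε⁻¹⌉₊ := Nat.find_min' hp hpS
  refine ⟨s, hsle, ?_⟩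
  -- upper bound on M
  have hM2 : M ≤ ENNReal.ofReal (2 * (2⁻¹:ℝ)^s) := by
    rcases Nat.eq_zero_or_pos s with hs0 | hs0
    · rw [hs0]
      calc M ≤ 1 := hM1
        _ ≤ ENNReal.ofReal (2 * (2⁻¹:ℝ)^0) := by
            rw [pow_zero, mul_one]; exact ENNReal.one_le_ofReal.2 one_le_two
    · obtain ⟨r, hr⟩ := Nat.exists_eq_succ_of_ne_zero hs0.ne'
      have hnot : ¬ ENNReal.ofReal ((2⁻¹:ℝ)^r) ≤ M :=
        Nat.find_min hp (by omega)
      push_neg at hnot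
      refine hnot.le.trans (le_of_eq ?_)
      congr 1
      rw [hr, pow_succ]
      ring
  -- length lower bound
  have hba : ε * 2^s / 2 ≤ b - a := by
    have h1 : ENNReal.ofReal ε ≤ ENNReal.ofReal (2 * (2⁻¹:ℝ)^s * (b - a)) := by
      calc ENNReal.ofReal ε ≤ M * ENNReal.ofReal (b - a) := hkey
        _ ≤ ENNReal.ofReal (2 * (2⁻¹:ℝ)^s) * ENNReal.ofReal (b - a) :=
            _root_.mul_le_mul_left hM2 _
        _ = ENNReal.ofReal (2 * (2⁻¹:ℝ)^s * (b - a)) := by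
            rw [← ENNReal.ofReal_mul (by positivity)]
    have h2 : ε ≤ 2 * (2⁻¹:ℝ)^s * (b - a) := by
      rw [ENNReal.ofReal_le_ofReal_iff (by nlinarith [pow_pos (by norm_num : (0:ℝ) < 2⁻¹) s])] at h1
      exact h1
    have h3 : (2⁻¹:ℝ)^s * 2^s = 1 := by
      rw [← mul_pow]; norm_num
    have h4 : (0:ℝ) < 2^s := by positivity
    nlinarith
  -- pick the point with a big slice
  have hlt : ENNReal.ofReal ((2⁻¹:ℝ)^(s+1)) < M := by
    refine lt_of_lt_of_le ?_ hps
    have : ((2⁻¹:ℝ))^(s+1) < (2⁻¹:ℝ)^s := by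
      rw [pow_succ]
      nlinarith [pow_pos (by norm_num : (0:ℝ) < 2⁻¹) s]
    exact (ENNReal.ofReal_lt_ofReal_iff (by positivity)).2 this
  rw [hMdef, lt_iSup_iff] at hlt
  obtain ⟨tp, htp⟩ := hlt
  have htpJ : tp ∈ Set.Icc a b := by
    by_contra hc
    rw [hf0 tp hc] at htp
    exact absurd htp (by simp)
  set δ : ℝ := ε * 2^s / 8 with hδdef
  have hδ0 : 0 < δ := by positivity
  set u : ℝ := (tp + a)/2 with hudef
  set v : ℝ := (tp + b)/2 with hvdef
  have huv : 2*δ ≤ v - u := by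
    rw [hudef, hvdef, hδdef]
    have := htpJ.1
    have := htpJ.2
    linarith [hba]
  have hu0 : 0 ≤ u := by
    rw [hudef]; linarith [htpJ.1, ha0]
  have hv1 : v ≤ 1 := by
    rw [hvdef]; linarith [htpJ.2, hb1]
  set k := ⌈u/δ⌉₊ with hkdef
  have hku : u ≤ (k:ℝ) * δ := by
    rw [hkdef]
    rw [← div_le_iff₀ hδ0]  -- u/δ ≤ k  ... careful direction
    exact Nat.le_ceil _
  have hkv : (k:ℝ) * δ ≤ v := by
    have h1 : (k:ℝ) < u/δ + 1 := Nat.ceil_lt_add_one (by positivity)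
    have h2 : (k:ℝ) * δ < u + δ := by
      have := mul_lt_mul_of_pos_right h1 hδ0
      rwa [add_mul, div_mul_cancel₀ _ hδ0.ne', one_mul] at this
    linarith
  refine ⟨k, by linarith, ?_⟩
  -- the slice at k*δ is big
  set t1 : ℝ := 2*((k:ℝ)*δ) - tp with ht1def
  have ht1J : t1 ∈ Set.Icc a b := by
    constructor
    · rw [ht1def]; rw [hudef] at hku; linarith
    · rw [ht1def]; rw [hvdef] at hkv; linarith
  rw [← hJ] at ht1J
  obtain ⟨x1, hx1, hx10⟩ := ht1J
  have hy1 : Fin.cons t1 (Fin.tail x1) ∈ K := by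
    rw [← hx10, Fin.cons_self_tail]
    exact hx1
  have hmain := slice_lower_bound (t0 := tp) hconv hy1
  have hmid : (tp + t1)/2 = (k:ℝ) * δ := by rw [ht1def]; ring
  rw [hmid] at hmain
  calc ENNReal.ofReal ((2⁻¹:ℝ)^(s+m+1))
      = ENNReal.ofReal ((2⁻¹:ℝ)^m * (2⁻¹:ℝ)^(s+1)) := by
        rw [← pow_add]
        congr 2
        omega
    _ = ENNReal.ofReal ((2⁻¹:ℝ)^m) * ENNReal.ofReal ((2⁻¹:ℝ)^(s+1)) :=
        ENNReal.ofReal_mul (by positivity)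
    _ ≤ ENNReal.ofReal ((2⁻¹:ℝ)^m) * f tp := _root_.mul_le_mul_right htp.le _
    _ ≤ volume {y : Fin m → ℝ | Fin.cons ((k:ℝ)*δ) y ∈ K} := hmain
def NetStatement (n : ℕ) : Prop :=
  ∃ C : ℝ, 0 < C ∧ ∀ ε : ℝ, ε ∈ Set.Ioo (0:ℝ) 1 →
    ∃ P : Finset (Fin n → ℝ), ↑P ⊆ cube n ∧
      (P.card : ℝ) ≤ C * ε⁻¹ * (1 - Real.log ε)^(n-1) ∧
      ∀ K : Set (Fin n → ℝ), IsCompact K → Convex ℝ K → K ⊆ cube n →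
        ENNReal.ofReal ε ≤ volume K → ∃ p ∈ P, p ∈ K

lemma net_dim_one : NetStatement 1 := by
  classical
  refine ⟨3, by norm_num, fun ε hε => ?_⟩
  obtain ⟨hε0, hε1⟩ := hε
  set δ : ℝ := ε/2 with hδdef
  have hδ0 : (0:ℝ) < δ := by positivity
  set P : Finset (Fin 1 → ℝ) :=
    (Finset.range (⌊(δ:ℝ)⁻¹⌋₊ + 1)).image (fun j : ℕ => (fun _ : Fin 1 => (j:ℝ)*δ)) with hPdef
  refine ⟨P, ?_, ?_, ?_⟩
  · intro x hx
    rw [hPdef] at hx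
    simp only [Finset.coe_image, Set.mem_image, Finset.mem_coe, Finset.mem_range] at hx
    obtain ⟨j, hj, rfl⟩ := hx
    rw [mem_cube]
    intro i
    constructor
    · positivity
    · have hj' : (j:ℝ) ≤ δ⁻¹ := by
        have : (j:ℝ) ≤ (⌊(δ:ℝ)⁻¹⌋₊:ℝ) := by exact_mod_cast Nat.lt_succ_iff.1 hj
        exact this.trans (Nat.floor_le (by positivity))
      calc (j:ℝ) * δ ≤ δ⁻¹ * δ := by nlinarith
        _ = 1 := inv_mul_cancel₀ hδ0.ne'
  · calc (P.card : ℝ) ≤ ((⌊(δ:ℝ)⁻¹⌋₊ + 1 : ℕ) : ℝ) := by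
          exact_mod_cast (Finset.card_image_le.trans (by rw [Finset.card_range]))
      _ ≤ δ⁻¹ + 1 := by
          push_cast
          have := Nat.floor_le (show (0:ℝ) ≤ δ⁻¹ by positivity)
          linarith
      _ ≤ 3 * ε⁻¹ * (1 - Real.log ε)^(1-1) := by
          rw [pow_zero, mul_one, hδdef]
          have h1 : (ε/2)⁻¹ = 2 * ε⁻¹ := by field_simp
          have h2 : (1:ℝ) ≤ ε⁻¹ := (one_le_inv₀ hε0).2 hε1.le
          rw [h1]; linarith
  · intro K hcomp hconv hsub hvol
    have hne : K.Nonempty := by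
      rcases Set.eq_empty_or_nonempty K with h | h
      · exfalso
        rw [h, measure_empty] at hvol
        exact (ENNReal.ofReal_pos.2 hε0).ne' (le_antisymm hvol (zero_le))
      · exact h
    obtain ⟨a, b, hab, hJ⟩ := exists_Icc_image hcomp hconv hne 0
    have haJ : a ∈ (fun x : Fin 1 → ℝ => x 0) '' K := by rw [hJ]; exact ⟨le_rfl, hab⟩
    have hbJ : b ∈ (fun x : Fin 1 → ℝ => x 0) '' K := by rw [hJ]; exact ⟨hab, le_rfl⟩
    have ha0 : 0 ≤ a := by
      obtain ⟨x, hx, hx0⟩ := haJ; rw [← hx0]; exact (mem_cube.1 (hsub hx) 0).1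
    have hb1 : b ≤ 1 := by
      obtain ⟨x, hx, hx0⟩ := hbJ; rw [← hx0]; exact (mem_cube.1 (hsub hx) 0).2
    -- the interval has length ≥ ε
    have hba : ε ≤ b - a := by
      have hKsub : K ⊆ {x : Fin 1 → ℝ | ∀ i, x i ∈ Set.Icc a b} := by
        intro x hx i
        have : x i ∈ (fun x : Fin 1 → ℝ => x 0) '' K :=
          ⟨x, hx, congrArg x (Subsingleton.elim 0 i)⟩
        rw [hJ] at this; exact this
      have h1 : volume K ≤ ENNReal.ofReal (b - a) := by
        calc volume K ≤ volume {x : Fin 1 → ℝ | ∀ i, x i ∈ Set.Icc a b} :=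
              measure_mono hKsub
          _ = ENNReal.ofReal (b - a) := by
              have : {x : Fin 1 → ℝ | ∀ i, x i ∈ Set.Icc a b}
                  = Set.pi Set.univ (fun _ : Fin 1 => Set.Icc a b) := by
                ext x; simp [Set.mem_pi, Pi.le_def, forall_and]
              rw [this, volume_pi_pi]
              simp [Real.volume_Icc]
      have := hvol.trans h1
      rwa [ENNReal.ofReal_le_ofReal_iff (by linarith)] at this
    set k := ⌈a/δ⌉₊ with hkdef
    have hka : a ≤ (k:ℝ) * δ := by
      rw [hkdef, ← div_le_iff₀ hδ0]
      exact Nat.le_ceil _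
    have hkb : (k:ℝ) * δ ≤ b := by
      have h1 : (k:ℝ) < a/δ + 1 := Nat.ceil_lt_add_one (by positivity)
      have h2 : (k:ℝ) * δ < a + δ := by
        have := mul_lt_mul_of_pos_right h1 hδ0
        rwa [add_mul, div_mul_cancel₀ _ hδ0.ne', one_mul] at this
      have h3 : δ ≤ (b-a)/2 := by rw [hδdef]; linarith
      linarith
    have hkJ : (k:ℝ) * δ ∈ Set.Icc a b := ⟨hka, hkb⟩
    rw [← hJ] at hkJ
    obtain ⟨x, hx, hx0⟩ := hkJ
    refine ⟨x, ?_, hx⟩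
    rw [hPdef]
    simp only [Finset.mem_image, Finset.mem_range]
    refine ⟨k, ?_, ?_⟩
    · rw [Nat.lt_succ_iff, Nat.le_floor_iff (by positivity)]
      have hkb1 : (k:ℝ) * δ ≤ 1 := hkb.trans hb1
      rw [← le_div_iff₀ hδ0] at hkb1
      simpa [one_div] using hkb1
    · funext i
      rw [← hx0]
      exact congrArg x (Subsingleton.elim 0 i)
lemma net_step (m : ℕ) (hm : 1 ≤ m) (ih : NetStatement m) : NetStatement (m+1) := by
  classical
  obtain ⟨C, hC0, ihs⟩ := ih
  refine ⟨C * 2^(m+5) * ((m:ℝ)+5)^m, by positivity, fun ε hε => ?_⟩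
  obtain ⟨hε0, hε1⟩ := hε
  have hεinv1 : (1:ℝ) ≤ ε⁻¹ := (one_le_inv₀ hε0).2 hε1.le
  set S := ⌈Real.logb 2 ε⁻¹⌉₊ with hSdef
  have hεs : ∀ s : ℕ, ((2⁻¹:ℝ)^(s+m+1)) ∈ Set.Ioo (0:ℝ) 1 := by
    intro s
    constructor
    · positivity
    · apply pow_lt_one₀ (by norm_num) (by norm_num)
      omega
  choose Q hQsub hQcard hQhit using fun s : ℕ => ihs ((2⁻¹:ℝ)^(s+m+1)) (hεs s)
  set δ : ℕ → ℝ := fun s => ε * 2^s / 8 with hδdef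
  have hδ0 : ∀ s, 0 < δ s := fun s => by positivity
  set G : ℕ → Finset ℝ :=
    fun s => (Finset.range (⌊(δ s)⁻¹⌋₊ + 1)).image (fun j : ℕ => (j:ℝ) * δ s) with hGdef
  have hGmem : ∀ s, ∀ t ∈ G s, 0 ≤ t ∧ t ≤ 1 := by
    intro s t ht
    rw [hGdef] at ht
    simp only [Finset.mem_image, Finset.mem_range] at ht
    obtain ⟨j, hj, rfl⟩ := ht
    constructor
    · positivity
    · have hj' : (j:ℝ) ≤ (δ s)⁻¹ := by
        have : (j:ℝ) ≤ (⌊(δ s)⁻¹⌋₊:ℝ) := by exact_mod_cast Nat.lt_succ_iff.1 hj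
        exact this.trans (Nat.floor_le (by positivity))
      calc (j:ℝ) * δ s ≤ (δ s)⁻¹ * δ s := by nlinarith [hδ0 s]
        _ = 1 := inv_mul_cancel₀ (hδ0 s).ne'
  set P : Finset (Fin (m+1) → ℝ) := (Finset.range (S+1)).biUnion
    (fun s => ((G s) ×ˢ (Q s)).image
      (fun p => (Fin.cons p.1 p.2 : Fin (m+1) → ℝ))) with hPdef
  have h2S : (2:ℝ)^S ≤ 2 * ε⁻¹ := by
    have hlogb0 : 0 ≤ Real.logb 2 ε⁻¹ := Real.logb_nonneg one_lt_two hεinv1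
    have hceil : (S:ℝ) < Real.logb 2 ε⁻¹ + 1 := Nat.ceil_lt_add_one hlogb0
    have h1 : (2:ℝ)^(S:ℝ) ≤ (2:ℝ)^(Real.logb 2 ε⁻¹ + 1) :=
      (Real.rpow_le_rpow_left_iff one_lt_two).2 hceil.le
    rw [Real.rpow_add two_pos, Real.rpow_logb two_pos (by norm_num) (by positivity),
      Real.rpow_one, Real.rpow_natCast] at h1
    linarith
  refine ⟨P, ?_, ?_, ?_⟩
  · -- P ⊆ cube (m+1)
    intro x hx
    rw [hPdef] at hx
    simp only [Finset.coe_biUnion, Finset.coe_image, Set.mem_iUnion, Finset.mem_coe,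
      Finset.mem_image, Finset.mem_range, Set.mem_image, Finset.mem_product] at hx
    obtain ⟨s, hs, ⟨t, q⟩, ⟨htG, hqQ⟩, rfl⟩ := hx
    rw [mem_cube]
    intro i
    refine Fin.cases ?_ (fun j => ?_) i
    · simpa using ⟨(hGmem s t htG).1, (hGmem s t htG).2⟩
    · simpa using mem_cube.1 (hQsub s hqQ) j
  · -- cardinality
    have hcard1 : (P.card:ℝ) ≤
        ∑ s ∈ Finset.range (S+1), ((G s).card : ℝ) * ((Q s).card : ℝ) := by
      have h0 : P.card ≤ ∑ s ∈ Finset.range (S+1),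
          (((G s) ×ˢ (Q s)).image (fun p => (Fin.cons p.1 p.2 : Fin (m+1) → ℝ))).card := by
        rw [hPdef]; exact Finset.card_biUnion_le
      calc (P.card:ℝ) ≤ ∑ s ∈ Finset.range (S+1),
            ((((G s) ×ˢ (Q s)).image (fun p => (Fin.cons p.1 p.2 : Fin (m+1) → ℝ))).card : ℝ) :=
          by exact_mod_cast h0
        _ ≤ ∑ s ∈ Finset.range (S+1), ((G s).card : ℝ) * ((Q s).card : ℝ) := by
            apply Finset.sum_le_sum
            intro s _
            calc ((((G s) ×ˢ (Q s)).image (fun p => (Fin.cons p.1 p.2 : Fin (m+1) → ℝ))).card : ℝ)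
                ≤ (((G s) ×ˢ (Q s)).card : ℝ) := by exact_mod_cast Finset.card_image_le
              _ = ((G s).card : ℝ) * ((Q s).card : ℝ) := by
                  rw [Finset.card_product]; push_cast; ring
    have hGs : ∀ s, s ≤ S → ((G s).card : ℝ) ≤ 16 / (ε * 2^s) := by
      intro s hs
      have hδ1 : δ s ≤ 1 := by
        have hmono : (2:ℝ)^s ≤ 2^S := pow_le_pow_right₀ (by norm_num) hs
        have hc : ε * ε⁻¹ = 1 := mul_inv_cancel₀ hε0.ne'
        rw [hδdef]
        simp only
        nlinarith
      have hδinv : (1:ℝ) ≤ (δ s)⁻¹ := (one_le_inv₀ (hδ0 s)).2 hδ1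
      have hinv : (δ s)⁻¹ = 8 / (ε * 2^s) := by
        rw [hδdef]
        simp only
        rw [inv_div]
      have hcard : ((G s).card : ℝ) ≤ (⌊(δ s)⁻¹⌋₊ : ℝ) + 1 := by
        have h := Finset.card_image_le (s := Finset.range (⌊(δ s)⁻¹⌋₊ + 1))
          (f := fun j : ℕ => (j:ℝ) * δ s)
        rw [Finset.card_range] at h
        rw [hGdef]
        exact_mod_cast h
      have hfl : (⌊(δ s)⁻¹⌋₊ : ℝ) ≤ (δ s)⁻¹ := Nat.floor_le (by positivity)
      calc ((G s).card : ℝ) ≤ (δ s)⁻¹ + 1 := by linarith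
        _ ≤ 2 * (δ s)⁻¹ := by linarith
        _ = 16 / (ε * 2^s) := by rw [hinv]; ring
    have hQS : ∀ s, s ≤ S →
        ((Q s).card : ℝ) ≤ C * 2^(s+m+1) * (((S:ℝ)+m+2))^(m-1) := by
      intro s hs
      have hlog2 : Real.log 2 ≤ 1 := by
        have := Real.log_two_lt_d9
        linarith
      have hlog2' : 0 ≤ Real.log 2 := Real.log_nonneg one_le_two
      have h1 : ((2⁻¹:ℝ)^(s+m+1))⁻¹ = 2^(s+m+1) := by rw [← inv_pow, inv_inv]
      have h2 : (1 - Real.log ((2⁻¹:ℝ)^(s+m+1)))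
          = 1 + ((s+m+1:ℕ):ℝ) * Real.log 2 := by
        rw [Real.log_pow, Real.log_inv]
        push_cast
        ring
      have hbase0 : (0:ℝ) ≤ 1 + ((s+m+1:ℕ):ℝ) * Real.log 2 := by positivity
      have h3 : 1 + ((s+m+1:ℕ):ℝ) * Real.log 2 ≤ (S:ℝ)+m+2 := by
        have hsc : (s:ℝ) ≤ (S:ℝ) := by exact_mod_cast hs
        push_cast
        nlinarith
      have h4 : (1 - Real.log ((2⁻¹:ℝ)^(s+m+1)))^(m-1) ≤ (((S:ℝ)+m+2))^(m-1) := by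
        rw [h2]
        exact pow_le_pow_left₀ hbase0 h3 (m-1)
      calc ((Q s).card : ℝ)
          ≤ C * ((2⁻¹:ℝ)^(s+m+1))⁻¹ * (1 - Real.log ((2⁻¹:ℝ)^(s+m+1)))^(m-1) := hQcard s
        _ = C * 2^(s+m+1) * (1 - Real.log ((2⁻¹:ℝ)^(s+m+1)))^(m-1) := by rw [h1]
        _ ≤ C * 2^(s+m+1) * (((S:ℝ)+m+2))^(m-1) := by
            apply mul_le_mul_of_nonneg_left h4
            positivity
    have hterm : ∀ s ∈ Finset.range (S+1), ((G s).card : ℝ) * ((Q s).card : ℝ)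
        ≤ C * 2^(m+5) * ε⁻¹ * (((S:ℝ)+m+2))^(m-1) := by
      intro s hs
      rw [Finset.mem_range, Nat.lt_succ_iff] at hs
      have h1 : ((G s).card : ℝ) * ((Q s).card : ℝ)
          ≤ (16 / (ε * 2^s)) * (C * 2^(s+m+1) * (((S:ℝ)+m+2))^(m-1)) := by
        apply mul_le_mul (hGs s hs) (hQS s hs) (by positivity) (by positivity)
      refine h1.trans (le_of_eq ?_)
      have hps : (2:ℝ)^(s+m+1) = 2^s * 2^(m+1) := by
        rw [← pow_add]
        congr 1
      have h16 : (16:ℝ) * 2^(m+1) = 2^(m+5) := by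
        rw [show (16:ℝ) = 2^4 by norm_num, ← pow_add]
        congr 1
        omega
      rw [hps, ← h16]
      have hε' : ε ≠ 0 := hε0.ne'
      have h2s : (2:ℝ)^s ≠ 0 := by positivity
      field_simp
    have hsum : (P.card:ℝ) ≤ ((S:ℝ)+1) * (C * 2^(m+5) * ε⁻¹ * (((S:ℝ)+m+2))^(m-1)) := by
      refine hcard1.trans ?_
      have := Finset.sum_le_card_nsmul (Finset.range (S+1))
        (fun s => ((G s).card : ℝ) * ((Q s).card : ℝ))
        (C * 2^(m+5) * ε⁻¹ * (((S:ℝ)+m+2))^(m-1)) hterm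
      rw [Finset.card_range, nsmul_eq_mul] at this
      refine this.trans (le_of_eq ?_)
      push_cast
      ring
    refine hsum.trans ?_
    -- final arithmetic
    set L : ℝ := 1 - Real.log ε with hLdef
    have hL1 : (1:ℝ) ≤ L := by
      have := Real.log_neg hε0 hε1
      rw [hLdef]
      linarith
    have hlogb : Real.logb 2 ε⁻¹ ≤ 2 * (L - 1) := by
      have hlog2 : (1/2:ℝ) ≤ Real.log 2 := by
        have := Real.log_two_gt_d9
        linarith
      have hlinv : Real.log ε⁻¹ = L - 1 := by
        rw [Real.log_inv, hLdef]
        ring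
      rw [Real.logb, hlinv]
      rw [div_le_iff₀ (by linarith)]
      nlinarith
    have hS2 : (S:ℝ) ≤ 2*(L-1) + 1 := by
      have h0 : 0 ≤ Real.logb 2 ε⁻¹ := Real.logb_nonneg one_lt_two hεinv1
      have := Nat.ceil_lt_add_one h0
      rw [hSdef]
      have h1 : ((⌈Real.logb 2 ε⁻¹⌉₊:ℕ):ℝ) < Real.logb 2 ε⁻¹ + 1 := this
      linarith
    have hmR : (0:ℝ) ≤ (m:ℝ) := Nat.cast_nonneg m
    have hB : (S:ℝ) + m + 2 ≤ ((m:ℝ)+5)*L := by nlinarith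
    have hA : (S:ℝ) + 1 ≤ ((m:ℝ)+5)*L := by nlinarith
    have hBnn : (0:ℝ) ≤ (S:ℝ) + m + 2 := by positivity
    have hTnn : (0:ℝ) ≤ ((m:ℝ)+5)*L := by nlinarith
    have hXnn : (0:ℝ) ≤ C * 2^(m+5) * ε⁻¹ := by positivity
    have hpowle : (((S:ℝ)+m+2))^(m-1) ≤ (((m:ℝ)+5)*L)^(m-1) := pow_le_pow_left₀ hBnn hB (m-1)
    calc ((S:ℝ)+1) * (C * 2^(m+5) * ε⁻¹ * (((S:ℝ)+m+2))^(m-1))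
        ≤ (((m:ℝ)+5)*L) * (C * 2^(m+5) * ε⁻¹ * ((((m:ℝ)+5)*L))^(m-1)) := by
          apply mul_le_mul hA (mul_le_mul_of_nonneg_left hpowle hXnn)
            (by positivity) hTnn
      _ = C * 2^(m+5) * ε⁻¹ * (((((m:ℝ)+5)*L))^(m-1) * ((((m:ℝ)+5))*L)) := by ring
      _ = C * 2^(m+5) * ε⁻¹ * ((((m:ℝ)+5)*L))^m := by
          rw [← pow_succ]
          have : m - 1 + 1 = m := by omega
          rw [this]
      _ = C * 2^(m+5) * ((m:ℝ)+5)^m * ε⁻¹ * L^m := by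
          rw [mul_pow]
          ring
      _ = C * 2^(m+5) * ((m:ℝ)+5)^m * ε⁻¹ * (1 - Real.log ε)^(m+1-1) := by
          norm_num [hLdef]
  · -- hitting
    intro K hcomp hconv hsub hvol
    obtain ⟨s, hsS, k, hk1, hbig⟩ := step_hit ⟨hε0, hε1⟩ hcomp hconv hsub hvol
    have hsl := slice_props hcomp hconv hsub ((k:ℝ) * (ε * 2^s / 8))
    obtain ⟨q, hqQ, hqK⟩ := hQhit s _ hsl.1 hsl.2.1 hsl.2.2 hbig
    refine ⟨Fin.cons ((k:ℝ) * (ε * 2^s / 8)) q, ?_, hqK⟩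
    rw [hPdef]
    rw [Finset.mem_biUnion]
    refine ⟨s, Finset.mem_range.2 (by omega), ?_⟩
    rw [Finset.mem_image]
    refine ⟨((k:ℝ) * (ε * 2^s / 8), q), Finset.mem_product.2 ⟨?_, hqQ⟩, rfl⟩
    rw [hGdef]
    simp only [Finset.mem_image, Finset.mem_range]
    refine ⟨k, ?_, rfl⟩
    rw [Nat.lt_succ_iff, Nat.le_floor_iff (by positivity)]
    have := hδ0 s
    rw [← le_div_iff₀ (hδ0 s)] at hk1
    simpa [one_div] using hk1
lemma pi_net : ∀ n : ℕ, 1 ≤ n → NetStatement n := by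
  intro n hn
  induction n, hn using Nat.le_induction with
  | base => exact net_dim_one
  | succ m hm ih => exact net_step m hm ih

end WeakNetAux

end WeakNetAuxSection

open WeakNetAux


/-- For every `d ≥ 2` there is a constant `C_d > 0` such that for every `ε ∈ (0,1)` there
is a `(0,ε)`-net for `[0,1]^d`, i.e. a point set `P ⊆ [0,1]^d` of size
`O_d(ε⁻¹ log^{d-1}(1/ε))` meeting every compact convex set `Ξ` with
`vol(Ξ ∩ [0,1]^d) ≥ ε`. -/
theorem weak_eps_net_points (d : ℕ) (hd : 2 ≤ d) :
    ∃ C : ℝ, 0 < C ∧ ∀ ε : ℝ, ε ∈ Set.Ioo (0 : ℝ) 1 →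
      ∃ P : Finset (EuclideanSpace ℝ (Fin d)),
        ↑P ⊆ unitCube d ∧
        (P.card : ℝ) ≤ C * ε⁻¹ * (Real.log (1 / ε)) ^ (d - 1) + C ∧
        ∀ Ξ : Set (EuclideanSpace ℝ (Fin d)), IsCompact Ξ → Convex ℝ Ξ →
          ENNReal.ofReal ε ≤ volume (Ξ ∩ unitCube d) → ∃ p ∈ P, p ∈ Ξ := by

  classical
  obtain ⟨C, hC0, hspec⟩ := pi_net d (by omega)
  set LL := PiLp.continuousLinearEquiv 2 ℝ (fun _ : Fin d => ℝ) with hLLdef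
  have hLLapp : ∀ (x : EuclideanSpace ℝ (Fin d)) (i : Fin d), LL x i = x i := fun _ _ => rfl
  have hLLsymmapp : ∀ (q : Fin d → ℝ) (i : Fin d), (LL.symm q) i = q i := fun _ _ => rfl
  have hcubepre : unitCube d = ⇑LL ⁻¹' cube d := by
    ext x
    simp only [unitCube, Set.mem_setOf_eq, Set.mem_preimage, mem_cube]
    exact Iff.rfl
  have hcubeconv : Convex ℝ (cube d) := by
    rw [cube_eq_pi]
    exact convex_pi (fun i _ => convex_Icc 0 1)
  have hunitclosed : IsClosed (unitCube d) := by
    rw [hcubepre]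
    exact (isCompact_cube d).isClosed.preimage LL.continuous
  have hunitconv : Convex ℝ (unitCube d) := by
    rw [hcubepre]
    exact hcubeconv.linear_preimage (LL.toLinearEquiv.toLinearMap)
  refine ⟨C * 2^(d-1) * 3, by positivity, fun ε hε => ?_⟩
  obtain ⟨hε0, hε1⟩ := hε
  obtain ⟨Pp, hPsub, hPcard, hPhit⟩ := hspec ε ⟨hε0, hε1⟩
  refine ⟨Pp.image (fun q => LL.symm q), ?_, ?_, ?_⟩
  · -- subset of unit cube
    intro p hp
    simp only [Finset.coe_image, Set.mem_image, Finset.mem_coe] at hp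
    obtain ⟨q, hq, rfl⟩ := hp
    intro i
    have := mem_cube.1 (hPsub hq) i
    simpa [hLLsymmapp] using this
  · -- cardinality
    have hcard1 : ((Pp.image (fun q => LL.symm q)).card : ℝ) ≤ (Pp.card : ℝ) := by
      exact_mod_cast Finset.card_image_le
    have hlog : Real.log (1/ε) = - Real.log ε := by
      rw [one_div, Real.log_inv]
    have hl0 : 0 < Real.log (1/ε) := by
      rw [hlog]
      have := Real.log_neg hε0 hε1
      linarith
    have hεinv0 : (0:ℝ) < ε⁻¹ := by positivity
    rcases le_or_gt 1 (Real.log (1/ε)) with hl1 | hl1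
    · -- small ε
      have h1 : (1 - Real.log ε) ≤ 2 * Real.log (1/ε) := by
        rw [hlog]; linarith
      have hbase : (0:ℝ) ≤ 1 - Real.log ε := by
        have := hl0
        rw [hlog] at this
        linarith
      have h2 : (1 - Real.log ε)^(d-1) ≤ (2 * Real.log (1/ε))^(d-1) :=
        pow_le_pow_left₀ hbase h1 (d-1)
      have h3 : (2 * Real.log (1/ε))^(d-1) = 2^(d-1) * (Real.log (1/ε))^(d-1) := mul_pow _ _ _
      calc ((Pp.image (fun q => LL.symm q)).card : ℝ) ≤ (Pp.card : ℝ) := hcard1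
        _ ≤ C * ε⁻¹ * (1 - Real.log ε)^(d-1) := hPcard
        _ ≤ C * ε⁻¹ * (2^(d-1) * (Real.log (1/ε))^(d-1)) := by
            rw [← h3]
            exact mul_le_mul_of_nonneg_left h2 (by positivity)
        _ ≤ C * 2^(d-1) * 3 * ε⁻¹ * (Real.log (1/ε))^(d-1) := by
            have hpos : (0:ℝ) ≤ C * ε⁻¹ * (2^(d-1) * (Real.log (1/ε))^(d-1)) := by positivity
            have e1 : C * 2^(d-1) * 3 * ε⁻¹ * (Real.log (1/ε))^(d-1)
                = 3 * (C * ε⁻¹ * (2^(d-1) * (Real.log (1/ε))^(d-1))) := by ring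
            rw [e1]
            linarith
        _ ≤ C * 2^(d-1) * 3 * ε⁻¹ * (Real.log (1/ε))^(d-1) + C * 2^(d-1) * 3 := by
            have : (0:ℝ) < C * 2^(d-1) * 3 := by positivity
            linarith
    · -- large ε
      have hεe : 3⁻¹ < ε := by
        have h1 : Real.log ε > -1 := by rw [hlog] at hl1; linarith
        have h2 : ε = Real.exp (Real.log ε) := (Real.exp_log hε0).symm
        have h3 : Real.exp (Real.log ε) > Real.exp (-1) := Real.exp_lt_exp.2 h1
        have h4 : Real.exp (-1) > 3⁻¹ := by
          rw [Real.exp_neg]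
          exact inv_strictAnti₀ (Real.exp_pos 1) (by linarith [Real.exp_one_lt_d9])
        linarith
      have hεinv3 : ε⁻¹ < 3 := by
        rw [inv_lt_comm₀ hε0 (by norm_num : (0:ℝ) < 3)]
        exact hεe
      have h1 : (1 - Real.log ε) ≤ 2 := by
        rw [hlog] at hl1
        linarith
      have hbase : (0:ℝ) ≤ 1 - Real.log ε := by
        have := hl0
        rw [hlog] at this
        linarith
      have h2 : (1 - Real.log ε)^(d-1) ≤ 2^(d-1) :=
        pow_le_pow_left₀ hbase h1 (d-1)
      have hfirst : (0:ℝ) ≤ C * 2^(d-1) * 3 * ε⁻¹ * (Real.log (1/ε))^(d-1) := by positivity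
      calc ((Pp.image (fun q => LL.symm q)).card : ℝ) ≤ (Pp.card : ℝ) := hcard1
        _ ≤ C * ε⁻¹ * (1 - Real.log ε)^(d-1) := hPcard
        _ ≤ C * 2^(d-1) * 3 := by
            have hp2 : (0:ℝ) < 2^(d-1) := pow_pos (by norm_num) (d-1)
            have e1 : C * ε⁻¹ * (1 - Real.log ε)^(d-1) ≤ C * ε⁻¹ * 2^(d-1) :=
              mul_le_mul_of_nonneg_left h2 (by positivity)
            have e2 : C * ε⁻¹ * 2^(d-1) ≤ C * 3 * 2^(d-1) := by nlinarith
            have e3 : C * 3 * 2^(d-1) = C * 2^(d-1) * 3 := by ring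
            linarith
        _ ≤ C * 2^(d-1) * 3 * ε⁻¹ * (Real.log (1/ε))^(d-1) + C * 2^(d-1) * 3 := by
            linarith
  · -- hitting
    intro Ξ hcompΞ hconvΞ hvolΞ
    set A := Ξ ∩ unitCube d with hAdef
    have hAcomp : IsCompact A := hcompΞ.inter_right hunitclosed
    have hAconv : Convex ℝ A := hconvΞ.inter hunitconv
    set K := ⇑LL '' A with hKdef
    have hKcomp : IsCompact K := hAcomp.image LL.continuous
    have hKconv : Convex ℝ K := hAconv.linear_image (LL.toLinearEquiv.toLinearMap)
    have hKsub : K ⊆ cube d := by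
      rintro - ⟨x, hx, rfl⟩
      rw [mem_cube]
      intro i
      exact hx.2 i
    have hKvol : ENNReal.ofReal ε ≤ volume K := by
      have hme : ⇑LL = ⇑(MeasurableEquiv.toLp 2 (Fin d → ℝ)).symm := rfl
      have h1 : K = (MeasurableEquiv.toLp 2 (Fin d → ℝ)).symm.symm ⁻¹' A := by
        rw [hKdef, hme, MeasurableEquiv.image_eq_preimage_symm]
      have h2 : volume ((MeasurableEquiv.toLp 2 (Fin d → ℝ)).symm.symm ⁻¹' A) = volume A :=
        ((EuclideanSpace.volume_preserving_symm_measurableEquiv_toLp (Fin d)).symm).measure_preimage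
          hAcomp.measurableSet.nullMeasurableSet
      rw [h1, h2]
      exact hvolΞ
    obtain ⟨q, hqP, hqK⟩ := hPhit K hKcomp hKconv hKsub hKvol
    obtain ⟨x, hxA, hxq⟩ := hqK
    refine ⟨LL.symm q, Finset.mem_image_of_mem _ hqP, ?_⟩
    rw [← hxq, LL.symm_apply_apply]
    exact hxA.1
end
end

section
/- For every ε ∈ (0,1) there exists a finite set P ⊆ [0,1]² with |P| ≤ ⌈4/ε⌉ such that every closed axis-aligned rectangle B ⊆ [0,1]² with area(B) ≥ ε contains a point of P. In fact, the Van der Corput set {(i/n, br(i)) : i = 0,…,n-1} with n = ⌈4/ε⌉ has this property, where br(i) = Σ_{j≥0} b_j·2^{-(j+1)} for i = Σ_{j≥0} b_j·2^j with b_j ∈ {0,1} the binary digits of i. -/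
open MeasureTheory

noncomputable section

/-- The binary bit-reversal of a natural number `i`: if `i = Σ_j b_j 2^j` with binary
digits `b_j ∈ {0,1}`, then `br i = Σ_j b_j / 2^(j+1)`. -/
def br (i : ℕ) : ℝ :=
  ∑' j : ℕ, (if Nat.testBit i j then (1 : ℝ) else 0) / 2 ^ (j + 1)

def brF (k i : ℕ) : ℝ :=
  ∑ j ∈ Finset.range k, (if Nat.testBit i j then (1 : ℝ) else 0) / 2 ^ (j + 1)

lemma summable_br (i : ℕ) :
    Summable (fun j : ℕ => (if Nat.testBit i j then (1 : ℝ) else 0) / 2 ^ (j + 1)) := by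
  apply Summable.of_nonneg_of_le (fun j => by positivity) (fun j => ?_)
    (summable_geometric_two)
  rw [div_le_iff₀ (by positivity)]
  calc (if Nat.testBit i j then (1:ℝ) else 0) ≤ 1 := by split <;> norm_num
    _ ≤ (1/2:ℝ)^j * 2^(j+1) := by
        rw [div_pow, one_pow, pow_succ]
        rw [div_mul_eq_mul_div, le_div_iff₀ (by positivity)]
        ring_nf
        nlinarith [pow_pos (show (0:ℝ) < 2 by norm_num) j]

lemma br_eq_brF {i k : ℕ} (h : i < 2 ^ k) : br i = brF k i := by
  rw [br, brF, tsum_eq_sum]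
  intro j hj
  rw [Nat.testBit_lt_two_pow (lt_of_lt_of_le h (Nat.pow_le_pow_right (by norm_num)
    (le_of_not_gt (fun hlt => hj (Finset.mem_range.mpr hlt)))))]
  simp

lemma brF_nonneg (k i : ℕ) : 0 ≤ brF k i :=
  Finset.sum_nonneg fun j _ => by positivity

lemma geom_sum_half (k : ℕ) : ∑ j ∈ Finset.range k, (1/2:ℝ)^(j+1) = 1 - (1/2:ℝ)^k := by
  induction k with
  | zero => simp
  | succ k ih => rw [Finset.sum_range_succ, ih]; ring

lemma brF_lt_one (k i : ℕ) : brF k i ≤ 1 - (1/2:ℝ)^k := by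
  have h : brF k i ≤ ∑ j ∈ Finset.range k, (1/2:ℝ)^(j+1) := by
    apply Finset.sum_le_sum
    intro j _
    rw [div_pow, one_pow, div_le_div_iff₀ (by positivity) (by positivity)]
    split <;> nlinarith [pow_pos (show (0:ℝ) < 2 by norm_num) (j+1)]
  exact h.trans (le_of_eq (geom_sum_half k))

lemma br_nonneg (i : ℕ) : 0 ≤ br i :=
  tsum_nonneg fun j => by positivity

lemma br_lt_one (i : ℕ) : br i < 1 := by
  rw [br_eq_brF (Nat.lt_two_pow_self)]
  calc brF i i ≤ 1 - (1/2:ℝ)^i := brF_lt_one i i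
    _ < 1 := by nlinarith [pow_pos (show (0:ℝ) < 1/2 by norm_num) i]

lemma br_decomp {r : ℕ} (k t : ℕ) (hr : r < 2 ^ k) :
    br (2 ^ k * t + r) = brF k r + br t / 2 ^ k := by
  have hsum := summable_br (2 ^ k * t + r)
  rw [br, ← Summable.sum_add_tsum_nat_add k hsum]
  congr 1
  · rw [brF]
    apply Finset.sum_congr rfl
    intro j hj
    rw [Nat.testBit_two_pow_mul_add t hr j, if_pos (show j < k from Finset.mem_range.mp hj)]
  · have : ∀ j : ℕ, (if Nat.testBit (2 ^ k * t + r) (j + k) then (1:ℝ) else 0) / 2 ^ (j + k + 1)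
        = ((if Nat.testBit t j then (1:ℝ) else 0) / 2 ^ (j + 1)) * (1 / 2 ^ k) := by
      intro j
      rw [Nat.testBit_two_pow_mul_add t hr (j + k),
        if_neg (show ¬(j + k < k) by omega), Nat.add_sub_cancel]
      rw [div_mul_div_comm, mul_one, ← pow_add]
      ring_nf
    simp_rw [this]
    rw [tsum_mul_right, ← br]
    ring

lemma brF_succ (k n : ℕ) :
    brF (k+1) n = brF k (n / 2) / 2 + (if n % 2 = 1 then (1:ℝ) else 0) / 2 := by
  rw [brF, Finset.sum_range_succ', brF, Finset.sum_div]
  congr 1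
  · apply Finset.sum_congr rfl
    intro j _
    rw [Nat.testBit_add_one, div_div, ← pow_succ]
  · norm_num [Nat.testBit_zero]

lemma exists_r (k : ℕ) : ∀ m : ℕ, m < 2 ^ k → ∃ r : ℕ, r < 2 ^ k ∧ brF k r = (m : ℝ) / 2 ^ k := by
  induction k with
  | zero =>
    intro m hm
    obtain rfl : m = 0 := Nat.lt_one_iff.mp (by simpa using hm)
    exact ⟨0, by norm_num, by simp [brF]⟩
  | succ k ih =>
    intro m hm
    have hpow : 2 ^ (k+1) = 2 * 2 ^ k := by ring
    obtain ⟨b, m', rfl, hm'lt, hb1⟩ :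
        ∃ b m', m = 2 ^ k * b + m' ∧ m' < 2 ^ k ∧ b ≤ 1 := by
      refine ⟨m / 2 ^ k, m % 2 ^ k, (Nat.div_add_mod m (2^k)).symm,
        Nat.mod_lt m (Nat.two_pow_pos k), ?_⟩
      rw [hpow] at hm
      exact Nat.lt_succ_iff.mp (Nat.div_lt_of_lt_mul (by omega))
    obtain ⟨r', hr', hbr⟩ := ih m' hm'lt
    refine ⟨b + 2 * r', by omega, ?_⟩
    have hdiv : (b + 2 * r') / 2 = r' := by omega
    have hmod : (b + 2 * r') % 2 = b := by omega
    rw [brF_succ, hdiv, hmod, hbr]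
    have h2k : (2:ℝ) ^ k ≠ 0 := by positivity
    interval_cases b <;> push_cast <;> rw [pow_succ] <;> field_simp <;> ring

lemma ceil_step {y C : ℝ} (hC : 0 < C) :
    ∃ t : ℕ, y ≤ C * t ∧ (t = 0 ∨ C * (t:ℝ) < y + C) := by
  rcases le_or_gt (y / C) 0 with h | h
  · refine ⟨0, ?_, Or.inl rfl⟩
    push_cast
    rw [mul_zero]
    rcases div_nonpos_iff.mp h with ⟨-, h2⟩ | ⟨h1, -⟩
    · linarith
    · exact h1
  · refine ⟨⌈y / C⌉₊, ?_, Or.inr ?_⟩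
    · have h1 := Nat.le_ceil (y / C)
      rw [div_le_iff₀ hC] at h1
      linarith [h1]
    · have h2 := Nat.ceil_lt_add_one (le_of_lt h)
      have h3 := mul_lt_mul_of_pos_left h2 hC
      rw [mul_add, mul_one, mul_div_cancel₀ y hC.ne'] at h3
      exact h3

lemma exists_K {y : ℝ} (h0 : 0 < y) (h1 : y ≤ 1) :
    ∃ K : ℕ, 2 ≤ (2:ℝ)^K * y ∧ (2:ℝ)^K * y ≤ 4 := by
  have hPex : ∃ K : ℕ, 2 / y ≤ (2:ℝ)^K := by
    obtain ⟨K0, hK0⟩ := pow_unbounded_of_one_lt (2 / y) (one_lt_two (α := ℝ))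
    exact ⟨K0, hK0.le⟩
  set K := Nat.find hPex with hKdef
  have hK2 : 2 / y ≤ (2:ℝ)^K := Nat.find_spec hPex
  rw [div_le_iff₀ h0] at hK2
  have hKpos : K ≠ 0 := by
    intro h
    rw [h, pow_zero, one_mul] at hK2
    linarith
  refine ⟨K, by linarith, ?_⟩
  obtain ⟨K', hKK'⟩ := Nat.exists_eq_succ_of_ne_zero hKpos
  have hmin := Nat.find_min hPex (m := K') (by omega)
  push_neg at hmin
  rw [lt_div_iff₀ h0] at hmin
  rw [hKK', pow_succ]
  nlinarith

set_option maxHeartbeats 2000000 in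
/-- The Van der Corput set `{(i/n, br i) : i = 0, …, n-1}` with `n = ⌈4/ε⌉` is a set of at
most `⌈4/ε⌉` points of `[0,1]²` meeting every closed axis-aligned rectangle `B ⊆ [0,1]²`
of area at least `ε`. -/
theorem van_der_corput_net (ε : ℝ) (hε : ε ∈ Set.Ioo (0 : ℝ) 1) :
    ∃ P : Finset (ℝ × ℝ),
      P = (Finset.range ⌈(4 : ℝ) / ε⌉₊).image
          (fun i : ℕ => ((i : ℝ) / (⌈(4 : ℝ) / ε⌉₊ : ℝ), br i)) ∧
      ↑P ⊆ Set.Icc (0 : ℝ) 1 ×ˢ Set.Icc (0 : ℝ) 1 ∧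
      P.card ≤ ⌈(4 : ℝ) / ε⌉₊ ∧
      ∀ a b c d : ℝ,
        Set.Icc a b ×ˢ Set.Icc c d ⊆ Set.Icc (0 : ℝ) 1 ×ˢ Set.Icc (0 : ℝ) 1 →
        ENNReal.ofReal ε ≤ volume (Set.Icc a b ×ˢ Set.Icc c d) →
        ∃ p ∈ P, p ∈ Set.Icc a b ×ˢ Set.Icc c d := by
  obtain ⟨hε0, hε1⟩ := hε
  set n : ℕ := ⌈(4:ℝ)/ε⌉₊ with hn
  clear_value n
  have hN4 : (4:ℝ)/ε ≤ n := hn ▸ Nat.le_ceil _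
  have hNpos : (0:ℝ) < n := lt_of_lt_of_le (by positivity) hN4
  have hεn : 4 ≤ ε * n := by rw [div_le_iff₀ hε0] at hN4; linarith
  refine ⟨_, rfl, ?_, Finset.card_image_le.trans (by simp), ?_⟩
  · rintro ⟨x, y⟩ hp
    rw [Finset.coe_image, Set.mem_image] at hp
    obtain ⟨i, hi, heq⟩ := hp
    rw [Finset.mem_coe, Finset.mem_range] at hi
    have hi' : (i:ℝ) ≤ n := by exact_mod_cast hi.le
    rw [← heq]
    exact ⟨⟨by positivity, by rw [div_le_one hNpos]; exact hi'⟩,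
      ⟨br_nonneg i, (br_lt_one i).le⟩⟩
  · intro a b c d hsub hvol
    have hvol' : volume (Set.Icc a b ×ˢ Set.Icc c d)
        = ENNReal.ofReal (b-a) * ENNReal.ofReal (d-c) := by
      rw [MeasureTheory.Measure.volume_eq_prod, MeasureTheory.Measure.prod_prod,
        Real.volume_Icc, Real.volume_Icc]
    rw [hvol'] at hvol
    have hba : 0 < b - a := by
      by_contra h
      push_neg at h
      rw [ENNReal.ofReal_eq_zero.mpr h, zero_mul, nonpos_iff_eq_zero,
        ENNReal.ofReal_eq_zero] at hvol
      linarith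
    have hdc : 0 < d - c := by
      by_contra h
      push_neg at h
      rw [ENNReal.ofReal_eq_zero.mpr h, mul_zero, nonpos_iff_eq_zero,
        ENNReal.ofReal_eq_zero] at hvol
      linarith
    have harea : ε ≤ (b - a) * (d - c) := by
      rw [← ENNReal.ofReal_mul hba.le] at hvol
      exact (ENNReal.ofReal_le_ofReal_iff (by positivity)).mp hvol
    have hac := hsub (Set.mk_mem_prod (Set.left_mem_Icc.mpr (by linarith))
      (Set.left_mem_Icc.mpr (by linarith)))
    have hbd := hsub (Set.mk_mem_prod (Set.right_mem_Icc.mpr (by linarith))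
      (Set.right_mem_Icc.mpr (by linarith)))
    have ha0 : 0 ≤ a := hac.1.1
    have hc0 : 0 ≤ c := hac.2.1
    have hb1 : b ≤ 1 := hbd.1.2
    have hd1 : d ≤ 1 := hbd.2.2
    clear hac hbd hvol hvol' hsub
    have hba1 : b - a ≤ 1 := by linarith
    have hdc1 : d - c ≤ 1 := by linarith
    obtain ⟨K, hK2', hK4⟩ := exists_K hdc hdc1
    have hKp : (0:ℝ) < 2^K := by positivity
    have h4dc : 4 ≤ (b-a)*(d-c)*n := by nlinarith
    have h2K_ba : (2:ℝ)^K ≤ (b-a)*n := by nlinarith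
    have h2K_n : (2:ℝ)^K ≤ n := by nlinarith
    -- choose m : dyadic interval [m/2^K, (m+1)/2^K] ⊆ [c,d]
    obtain ⟨m, hm_ge, hm_lt⟩ : ∃ m : ℕ, c * 2^K ≤ m ∧ (m:ℝ) < c * 2^K + 1 :=
      ⟨⌈c * 2^K⌉₊, Nat.le_ceil _, Nat.ceil_lt_add_one (by positivity)⟩
    have hm1d : (m:ℝ) + 1 ≤ d * 2^K := by nlinarith
    have hmK : m < 2^K := by
      have : (m:ℝ) < ((2^K : ℕ) : ℝ) := by push_cast; nlinarith
      exact_mod_cast this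
    obtain ⟨r, hrK, hbrF⟩ := exists_r K m hmK
    have hrKR : (r:ℝ) < 2^K := by
      have : (r:ℝ) < ((2^K : ℕ) : ℝ) := by exact_mod_cast hrK
      push_cast at this; exact this
    have hr0 : (0:ℝ) ≤ r := Nat.cast_nonneg r
    -- choose t and i
    obtain ⟨t, ht1, ht2⟩ := ceil_step (y := a * n - r) hKp
    have hiR : ((2^K * t + r : ℕ):ℝ) = 2^K * t + r := by push_cast; ring
    have hi_ge : a * n ≤ ((2^K * t + r : ℕ):ℝ) := by rw [hiR]; linarith
    have han : (0:ℝ) ≤ a * n := by positivity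
    have hbn : b * (n:ℝ) ≤ n := by nlinarith
    have hi_lt : ((2^K * t + r : ℕ):ℝ) < b * n := by
      rw [hiR]
      rcases ht2 with h0 | hlt
      · rw [h0]; push_cast; linarith
      · linarith
    have hi_n : 2^K * t + r < n := by
      have h1 : ((2^K * t + r : ℕ):ℝ) < (n:ℝ) := by linarith
      exact_mod_cast h1
    refine ⟨(((2^K * t + r : ℕ):ℝ)/n, br (2^K * t + r)),
      Finset.mem_image.mpr ⟨2^K * t + r, Finset.mem_range.mpr hi_n, rfl⟩, ?_, ?_⟩
    · constructor
      · rw [le_div_iff₀ hNpos]; linarith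
      · rw [div_le_iff₀ hNpos]; linarith
    · have hdec : br (2^K * t + r) = brF K r + br t / 2^K := br_decomp K t hrK
      rw [hdec, hbrF]
      have hbt0 : 0 ≤ br t := br_nonneg t
      have hbt1 : br t < 1 := br_lt_one t
      constructor
      · rw [← add_div, le_div_iff₀ hKp]
        nlinarith
      · rw [← add_div, div_le_iff₀ hKp]
        nlinarith
end
end

section
/- There exists a constant C > 0 such that for every dimension d ≥ 1 and every ε ∈ (0,1), there exists a finite set P ⊆ [0,1]^d with |P| ≤ 2^{C·d·log d}/ε such that every closed axis-aligned box B ⊆ [0,1]^d with vol(B) ≥ ε contains a point of P. -/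
open MeasureTheory Polynomial Finset

noncomputable section

/- ### auxiliary lemmas -/

lemma BoxNet.digits_recon (b : ℕ) : ∀ (k t : ℕ), t < b ^ k →
    ∑ j ∈ Finset.range k, (t / b ^ j % b) * b ^ j = t := by
  intro k
  induction k with
  | zero => intro t ht; simp at ht ⊢; omega
  | succ k ih =>
    intro t ht
    rw [Finset.sum_range_succ']
    have h1 : ∀ j, t / b ^ (j+1) = (t / b) / b ^ j := by
      intro j; rw [pow_succ', Nat.div_div_eq_div_mul]
    have h2 : ∑ j ∈ Finset.range k, (t / b ^ (j+1) % b) * b ^ (j+1)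
        = b * ∑ j ∈ Finset.range k, ((t / b) / b ^ j % b) * b ^ j := by
      rw [Finset.mul_sum]
      apply Finset.sum_congr rfl
      intro j _
      rw [h1 j, pow_succ]
      ring
    have h3 : t / b < b ^ k := Nat.div_lt_of_lt_mul (by rwa [← pow_succ'])
    rw [h2, ih (t / b) h3]
    simp only [pow_zero, mul_one, Nat.div_one]
    rw [add_comm]
    exact Nat.mod_add_div t b

lemma BoxNet.digit_sum_le (b : ℝ) (hb : 1 < b) (n : ℕ) :
    ∑ j ∈ Finset.range n, (b - 1) / b ^ (j + 1) = 1 - (1 / b) ^ n := by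
  induction n with
  | zero => simp
  | succ n ih =>
    rw [Finset.sum_range_succ, ih]
    have hb0 : (0:ℝ) < b := by linarith
    rw [one_div_pow, one_div_pow, pow_succ]
    field_simp
    ring

section Net

variable (p : ℕ) [Fact p.Prime]

/-- The polynomial with coefficient vector `v`. -/
noncomputable def BoxNet.polyOf (m : ℕ) (v : Fin m → ZMod p) : Polynomial (ZMod p) :=
  ∑ j : Fin m, Polynomial.monomial (j : ℕ) (v j)

lemma BoxNet.coeff_polyOf (m : ℕ) (v : Fin m → ZMod p) (j : Fin m) :
    (BoxNet.polyOf p m v).coeff (j : ℕ) = v j := by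
  rw [BoxNet.polyOf, finset_sum_coeff]
  rw [Finset.sum_eq_single j]
  · simp
  · intro b _ hb
    rw [coeff_monomial, if_neg]
    exact fun h => hb (Fin.ext h.symm ▸ rfl)
  · simp

lemma BoxNet.natDegree_polyOf_lt (m : ℕ) (hm : 0 < m) (v : Fin m → ZMod p) :
    (BoxNet.polyOf p m v).natDegree < m := by
  have : (BoxNet.polyOf p m v).natDegree ≤ m - 1 := by
    apply Polynomial.natDegree_sum_le_of_forall_le
    intro j _
    exact le_trans (natDegree_monomial_le _) (by omega)
  omega

lemma BoxNet.poly_zero_of_taylor (m d : ℕ) (c : Fin d → ZMod p) (hc : Function.Injective c)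
    (k : Fin d → ℕ) (hk : m ≤ ∑ i, k i) (g : Polynomial (ZMod p)) (hg : g.natDegree < m)
    (h : ∀ i, ∀ j < k i, (Polynomial.taylor (c i) g).coeff j = 0) : g = 0 := by
  by_contra hg0
  have hdvd : ∀ i, (X - C (c i)) ^ (k i) ∣ g := by
    intro i
    have h1 : X ^ (k i) ∣ Polynomial.taylor (c i) g := by
      rw [X_pow_dvd_iff]; exact h i
    obtain ⟨q, hq⟩ := h1
    have : g = (X - C (c i))^(k i) * Polynomial.taylor (-(c i)) q := by
      have h2 : g = Polynomial.taylor (-(c i)) (X ^ k i * q) := by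
        rw [← hq, taylor_taylor]; simp
      rw [h2, taylor_mul]
      congr 1
      rw [taylor_apply, X_pow_comp]
      rw [map_neg, sub_eq_add_neg]
    exact ⟨_, this⟩
  have hprod : ∏ i, (X - C (c i)) ^ (k i) ∣ g := by
    apply Finset.prod_dvd_of_coprime
    · intro i _ j _ hij
      exact ((pairwise_coprime_X_sub_C hc) hij).pow
    · intro i _
      exact hdvd i
  have hdeg : (∏ i, (X - C (c i)) ^ (k i)).natDegree ≤ g.natDegree :=
    Polynomial.natDegree_le_of_dvd hprod hg0
  have hmono : (∏ i, (X - C (c i)) ^ (k i)).natDegree = ∑ i, k i := by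
    rw [Polynomial.natDegree_prod]
    · congr 1; ext i; rw [Polynomial.natDegree_pow, Polynomial.natDegree_X_sub_C, mul_one]
    · intro i _
      exact pow_ne_zero _ (Polynomial.X_sub_C_ne_zero _)
  omega

lemma BoxNet.net_surjective (m d : ℕ) (hm : 0 < m) (c : Fin d → ZMod p)
    (hc : Function.Injective c)
    (k : Fin d → ℕ) (hk : ∑ i, k i = m) (w : ∀ i, Fin (k i) → ZMod p) :
    ∃ v : Fin m → ZMod p, ∀ i (j : Fin (k i)),
      (Polynomial.taylor (c i) (BoxNet.polyOf p m v)).coeff (j : ℕ) = w i j := by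
  classical
  set F : (Fin m → ZMod p) → (∀ i : Fin d, Fin (k i) → ZMod p) :=
    fun v i j => (Polynomial.taylor (c i) (BoxNet.polyOf p m v)).coeff (j : ℕ) with hF
  have hinj : Function.Injective F := by
    intro v w' hvw
    have hz : BoxNet.polyOf p m v - BoxNet.polyOf p m w' = 0 := by
      apply BoxNet.poly_zero_of_taylor p m d c hc k (le_of_eq hk.symm)
      · apply lt_of_le_of_lt (Polynomial.natDegree_sub_le _ _)
        exact max_lt (BoxNet.natDegree_polyOf_lt p m hm v) (BoxNet.natDegree_polyOf_lt p m hm w')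
      · intro i j hj
        rw [map_sub, Polynomial.coeff_sub, sub_eq_zero]
        exact congrFun (congrFun hvw i) ⟨j, hj⟩
    funext j
    have := sub_eq_zero.mp hz
    have h2 := congrArg (fun q => Polynomial.coeff q (j : ℕ)) this
    simpa [BoxNet.coeff_polyOf] using h2
  have hcard : Fintype.card (Fin m → ZMod p)
      = Fintype.card (∀ i : Fin d, Fin (k i) → ZMod p) := by
    simp only [Fintype.card_pi, Fintype.card_fun, Fintype.card_fin, ZMod.card,
      Finset.prod_const, Finset.card_univ]
    rw [Finset.prod_pow_eq_pow_sum, hk]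
  have hsurj : Function.Surjective F :=
    ((Fintype.bijective_iff_injective_and_card F).mpr ⟨hinj, hcard⟩).2
  obtain ⟨v, hv⟩ := hsurj w
  exact ⟨v, fun i j => congrFun (congrFun hv i) j⟩

end Net

lemma BoxNet.volume_box (d : ℕ) (a b : Fin d → ℝ) :
    volume {x : EuclideanSpace ℝ (Fin d) | ∀ i, x i ∈ Set.Icc (a i) (b i)} =
      ∏ i, ENNReal.ofReal (b i - a i) := by
  have h := (EuclideanSpace.volume_preserving_symm_measurableEquiv_toLp (ι := Fin d)).measure_preimage
    (s := Set.univ.pi fun i => Set.Icc (a i) (b i)) (by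
      exact (MeasurableSet.univ_pi (fun i => measurableSet_Icc)).nullMeasurableSet)
  have heq : {x : EuclideanSpace ℝ (Fin d) | ∀ i, x i ∈ Set.Icc (a i) (b i)} =
      (MeasurableEquiv.toLp 2 (Fin d → ℝ)).symm ⁻¹' (Set.univ.pi fun i => Set.Icc (a i) (b i)) := by
    ext x
    simp only [Set.mem_setOf_eq, Set.mem_preimage, Set.mem_pi, Set.mem_univ, true_implies]
    exact Iff.rfl
  rw [heq, h, volume_pi_pi]
  simp [Real.volume_Icc]

lemma BoxNet.box_facts (d : ℕ) (ε : ℝ) (hε0 : 0 < ε) (a b : Fin d → ℝ)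
    (hsub : {x : EuclideanSpace ℝ (Fin d) | ∀ i, x i ∈ Set.Icc (a i) (b i)} ⊆ unitCube d)
    (hvol : ENNReal.ofReal ε ≤
      volume {x : EuclideanSpace ℝ (Fin d) | ∀ i, x i ∈ Set.Icc (a i) (b i)}) :
    (∀ i, 0 ≤ a i) ∧ (∀ i, a i ≤ b i) ∧ (∀ i, b i ≤ 1) ∧ ε ≤ ∏ i, (b i - a i) := by
  rw [BoxNet.volume_box] at hvol
  by_cases hab : ∀ i, a i ≤ b i
  · have hxa : (WithLp.toLp 2 (fun i => a i) : EuclideanSpace ℝ (Fin d)) ∈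
        {x : EuclideanSpace ℝ (Fin d) | ∀ i, x i ∈ Set.Icc (a i) (b i)} :=
      fun i => ⟨le_refl _, hab i⟩
    have hxb : (WithLp.toLp 2 (fun i => b i) : EuclideanSpace ℝ (Fin d)) ∈
        {x : EuclideanSpace ℝ (Fin d) | ∀ i, x i ∈ Set.Icc (a i) (b i)} :=
      fun i => ⟨hab i, le_refl _⟩
    have ha01 := hsub hxa
    have hb01 := hsub hxb
    refine ⟨fun i => (ha01 i).1, hab, fun i => (hb01 i).2, ?_⟩
    have hnn : ∀ i ∈ Finset.univ, (0:ℝ) ≤ b i - a i := fun i _ => sub_nonneg.mpr (hab i)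
    rw [← ENNReal.ofReal_prod_of_nonneg hnn] at hvol
    have := ENNReal.ofReal_le_ofReal_iff (Finset.prod_nonneg hnn) |>.mp hvol
    exact this
  · exfalso
    push_neg at hab
    obtain ⟨j, hj⟩ := hab
    have : ∏ i, ENNReal.ofReal (b i - a i) = 0 := by
      apply Finset.prod_eq_zero (Finset.mem_univ j)
      simp [ENNReal.ofReal_eq_zero]
      linarith
    rw [this] at hvol
    simp only [nonpos_iff_eq_zero, ENNReal.ofReal_eq_zero] at hvol
    linarith

set_option maxHeartbeats 1000000 in
lemma BoxNet.main_ge2 (d : ℕ) (hd2 : 2 ≤ d) (ε : ℝ) (hε0 : 0 < ε) (hε1 : ε < 1) :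
    ∃ P : Finset (EuclideanSpace ℝ (Fin d)),
      ↑P ⊆ unitCube d ∧
      (P.card : ℝ) ≤ (2 : ℝ) ^ ((100:ℝ) * (d : ℝ) * Real.log d) / ε ∧
      ∀ a b : Fin d → ℝ,
        {x : EuclideanSpace ℝ (Fin d) | ∀ i, x i ∈ Set.Icc (a i) (b i)} ⊆ unitCube d →
        ENNReal.ofReal ε ≤
          volume {x : EuclideanSpace ℝ (Fin d) | ∀ i, x i ∈ Set.Icc (a i) (b i)} →
        ∃ p ∈ P, ∀ i, p i ∈ Set.Icc (a i) (b i) := by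
  haveI : DecidableEq (EuclideanSpace ℝ (Fin d)) := Classical.decEq _
  obtain ⟨q, hq, hdq, hq2d⟩ := Nat.bertrand d (by omega)
  haveI hqF : Fact q.Prime := ⟨hq⟩
  haveI : NeZero q := ⟨hq.pos.ne'⟩
  have hq1R : (1:ℝ) < (q:ℝ) := by exact_mod_cast hq.one_lt
  have hq0R : (0:ℝ) < (q:ℝ) := by linarith
  set m : ℕ := d + ⌈Real.logb q ((2:ℝ)^d / ε)⌉₊ with hm
  have hm0 : 0 < m := by omega
  set c : Fin d → ZMod q := fun i => ((i : ℕ) : ZMod q) with hcdef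
  have hc : Function.Injective c := by
    intro i j hij
    simp only [hcdef] at hij
    apply Fin.ext
    rw [← ZMod.val_natCast_of_lt (lt_trans i.isLt hdq),
      ← ZMod.val_natCast_of_lt (lt_trans j.isLt hdq), hij]
  set pt : (Fin m → ZMod q) → EuclideanSpace ℝ (Fin d) := fun v => WithLp.toLp 2 (fun i =>
    ∑ j ∈ Finset.range m,
      (((Polynomial.taylor (c i) (BoxNet.polyOf q m v)).coeff j).val : ℝ) / (q:ℝ)^(j+1)) with hpt
  set P : Finset (EuclideanSpace ℝ (Fin d)) := Finset.image pt Finset.univ with hP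
  have hpt01 : ∀ v i, pt v i ∈ Set.Icc (0:ℝ) 1 := by
    intro v i
    constructor
    · simp only [hpt, WithLp.ofLp_toLp]
      apply Finset.sum_nonneg
      intro j _
      positivity
    · have hub : pt v i ≤ ∑ j ∈ Finset.range m, ((q:ℝ) - 1) / (q:ℝ)^(j+1) := by
        simp only [hpt, WithLp.ofLp_toLp]
        apply Finset.sum_le_sum
        intro j _
        gcongr
        have h1 : ((Polynomial.taylor (c i) (BoxNet.polyOf q m v)).coeff j).val + 1 ≤ q :=
          ZMod.val_lt ((Polynomial.taylor (c i) (BoxNet.polyOf q m v)).coeff j)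
        have h2 := (Nat.cast_le (α := ℝ)).mpr h1
        push_cast at h2
        linarith
      rw [BoxNet.digit_sum_le (q:ℝ) hq1R m] at hub
      have : (0:ℝ) ≤ (1/(q:ℝ))^m := by positivity
      linarith
  refine ⟨P, ?_, ?_, ?_⟩
  · intro x hx
    simp only [hP, Finset.coe_image, Set.mem_image, Finset.mem_coe, Finset.mem_univ] at hx
    obtain ⟨v, _, rfl⟩ := hx
    intro i
    exact hpt01 v i
  · -- cardinality bound
    have hcard : P.card ≤ q ^ m := by
      apply le_trans Finset.card_image_le
      simp [ZMod.card]
    have hX : (0:ℝ) < (2:ℝ)^d / ε := by positivity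
    have h2d1 : (1:ℝ) ≤ (2:ℝ)^d / ε := by
      rw [le_div_iff₀ hε0]
      have : (1:ℝ) ≤ (2:ℝ)^d := one_le_pow₀ (by norm_num)
      linarith
    have hL0 : 0 ≤ Real.logb q ((2:ℝ)^d/ε) := Real.logb_nonneg hq1R h2d1
    have hmle : (m:ℝ) ≤ (d:ℝ) + Real.logb q ((2:ℝ)^d/ε) + 1 := by
      rw [hm]
      push_cast
      have := Nat.ceil_lt_add_one hL0
      linarith
    have hqm : ((q:ℝ)) ^ (m:ℕ) ≤ (q:ℝ) ^ ((d:ℝ) + Real.logb q ((2:ℝ)^d/ε) + 1) := by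
      rw [← Real.rpow_natCast (q:ℝ) m]
      exact Real.rpow_le_rpow_of_exponent_le hq1R.le hmle
    have hsplit : (q:ℝ) ^ ((d:ℝ) + Real.logb q ((2:ℝ)^d/ε) + 1)
        = (q:ℝ) ^ ((d:ℝ) + 1) * ((2:ℝ)^d / ε) := by
      rw [show (d:ℝ) + Real.logb q ((2:ℝ)^d/ε) + 1
        = ((d:ℝ) + 1) + Real.logb q ((2:ℝ)^d/ε) by ring]
      rw [Real.rpow_add hq0R, Real.rpow_logb hq0R (by linarith) hX]
    have hkey : (q:ℝ) ^ ((d:ℝ) + 1) * (2:ℝ)^d ≤ (2:ℝ) ^ ((100:ℝ) * (d : ℝ) * Real.log d) := by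
      have hd1R : (1:ℝ) ≤ (d:ℝ) := by exact_mod_cast (by omega : 1 ≤ d)
      have hd2R : (2:ℝ) ≤ (d:ℝ) := by exact_mod_cast hd2
      have hqd2 : (q:ℝ) ≤ (d:ℝ)^2 := by
        have : (q:ℝ) ≤ 2*(d:ℝ) := by exact_mod_cast hq2d
        nlinarith
      have h2d2 : (2:ℝ) ≤ (d:ℝ)^2 := by nlinarith
      have hstep1 : (q:ℝ) ^ ((d:ℝ) + 1) ≤ ((d:ℝ)^2) ^ ((d:ℝ) + 1) :=
        Real.rpow_le_rpow hq0R.le hqd2 (by linarith)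
      have hstep2 : (2:ℝ)^d ≤ ((d:ℝ)^2) ^ (d:ℝ) := by
        rw [← Real.rpow_natCast (2:ℝ) d]
        exact Real.rpow_le_rpow (by norm_num) h2d2 (by positivity)
      have hmul : (q:ℝ) ^ ((d:ℝ) + 1) * (2:ℝ)^d
          ≤ ((d:ℝ)^2) ^ ((d:ℝ) + 1) * ((d:ℝ)^2) ^ (d:ℝ) := by
        apply mul_le_mul hstep1 hstep2 (by positivity) (by positivity)
      have hcollect : ((d:ℝ)^2) ^ ((d:ℝ) + 1) * ((d:ℝ)^2) ^ (d:ℝ)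
          = (d:ℝ) ^ ((2:ℝ)*((d:ℝ)+1) + 2*(d:ℝ)) := by
        rw [← Real.rpow_natCast (d:ℝ) 2, ← Real.rpow_mul (by linarith),
          ← Real.rpow_mul (by linarith), ← Real.rpow_add (by linarith)]
        norm_num
      have hexp : (d:ℝ) ^ ((2:ℝ)*((d:ℝ)+1) + 2*(d:ℝ)) ≤ (d:ℝ) ^ ((5:ℝ)*(d:ℝ)) := by
        apply Real.rpow_le_rpow_of_exponent_le hd1R
        nlinarith
      have hdlog : (d:ℝ) = (2:ℝ) ^ (Real.logb 2 (d:ℝ)) :=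
        (Real.rpow_logb (by norm_num) (by norm_num) (by linarith)).symm
      have hfin : (d:ℝ) ^ ((5:ℝ)*(d:ℝ)) ≤ (2:ℝ) ^ ((100:ℝ) * (d : ℝ) * Real.log d) := by
        conv_lhs => rw [hdlog]
        rw [← Real.rpow_mul (by norm_num)]
        apply Real.rpow_le_rpow_of_exponent_le (by norm_num)
        have hlog2 : (0.6931471803:ℝ) < Real.log 2 := Real.log_two_gt_d9
        have hlogd : 0 ≤ Real.log (d:ℝ) := Real.log_nonneg hd1R
        have hd0R : (0:ℝ) ≤ (d:ℝ) := by positivity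
        have hlb : Real.logb 2 (d:ℝ) ≤ 2 * Real.log d := by
          rw [Real.logb, div_le_iff₀ (by linarith)]
          nlinarith
        have h5d : (0:ℝ) ≤ 5 * (d:ℝ) := by positivity
        have := mul_le_mul_of_nonneg_right hlb h5d
        have hdl : (0:ℝ) ≤ (d:ℝ) * Real.log d := mul_nonneg hd0R hlogd
        nlinarith
      calc (q:ℝ) ^ ((d:ℝ) + 1) * (2:ℝ)^d ≤ _ := hmul
        _ = _ := hcollect
        _ ≤ _ := hexp
        _ ≤ _ := hfin
    calc (P.card : ℝ) ≤ ((q:ℝ)) ^ (m:ℕ) := by exact_mod_cast hcard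
      _ ≤ (q:ℝ) ^ ((d:ℝ) + Real.logb q ((2:ℝ)^d/ε) + 1) := hqm
      _ = (q:ℝ) ^ ((d:ℝ) + 1) * ((2:ℝ)^d / ε) := hsplit
      _ = ((q:ℝ) ^ ((d:ℝ) + 1) * (2:ℝ)^d) / ε := by ring
      _ ≤ (2 : ℝ) ^ ((100:ℝ) * (d : ℝ) * Real.log d) / ε := by
          gcongr
  · -- hitting property
    intro a b hsub hvol
    obtain ⟨ha0, hab, hb1, hprod⟩ := BoxNet.box_facts d ε hε0 a b hsub hvol
    set ℓ : Fin d → ℝ := fun i => b i - a i with hℓdef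
    have hℓ01 : ∀ i, 0 ≤ ℓ i ∧ ℓ i ≤ 1 := by
      intro i
      constructor
      · simp only [hℓdef]; linarith [hab i]
      · simp only [hℓdef]; linarith [hb1 i, ha0 i]
    have hℓpos : ∀ i, ε ≤ ℓ i := by
      intro i
      calc ε ≤ ∏ j, ℓ j := hprod
        _ = ℓ i * ∏ j ∈ Finset.univ.erase i, ℓ j :=
            (Finset.mul_prod_erase Finset.univ ℓ (Finset.mem_univ i)).symm
        _ ≤ ℓ i * 1 := by
            apply mul_le_mul_of_nonneg_left _ (hℓ01 i).1
            apply Finset.prod_le_one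
            · intro j _; exact (hℓ01 j).1
            · intro j _; exact (hℓ01 j).2
        _ = ℓ i := mul_one _
    have hℓ0 : ∀ i, 0 < ℓ i := fun i => lt_of_lt_of_le hε0 (hℓpos i)
    set k : Fin d → ℕ := fun i => ⌈Real.logb q (2 / ℓ i)⌉₊ with hkdef
    have h2ℓ1 : ∀ i, (1:ℝ) ≤ 2 / ℓ i := by
      intro i
      rw [le_div_iff₀ (hℓ0 i)]
      linarith [(hℓ01 i).2]
    have hki : ∀ i, 2 ≤ ℓ i * (q:ℝ) ^ (k i : ℕ) := by
      intro i
      have h2ℓ0 : (0:ℝ) < 2 / ℓ i := div_pos two_pos (hℓ0 i)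
      have hlogle : Real.logb q (2/ℓ i) ≤ ((k i : ℕ) : ℝ) := Nat.le_ceil _
      have h := Real.rpow_le_rpow_of_exponent_le hq1R.le hlogle
      rw [Real.rpow_logb hq0R (by linarith) h2ℓ0, Real.rpow_natCast] at h
      rw [div_le_iff₀ (hℓ0 i)] at h
      linarith
    have hsumk : ∑ i, k i ≤ m := by
      have hterm : ∀ i, ((k i : ℕ) : ℝ) ≤ Real.logb q (2 / ℓ i) + 1 := by
        intro i
        exact (Nat.ceil_lt_add_one (Real.logb_nonneg hq1R (h2ℓ1 i))).le
      have hprod2 : ∏ i, (2 / ℓ i) ≤ (2:ℝ)^d / ε := by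
        rw [Finset.prod_div_distrib, Finset.prod_const, Finset.card_univ, Fintype.card_fin]
        gcongr
      have hlogmono : Real.logb q (∏ i, (2 / ℓ i)) ≤ Real.logb q ((2:ℝ)^d / ε) := by
        apply Real.logb_le_logb_of_le hq1R _ hprod2
        apply Finset.prod_pos
        intro i _
        exact div_pos two_pos (hℓ0 i)
      have hcast : ((∑ i, k i : ℕ) : ℝ) ≤ (m:ℝ) := by
        push_cast
        calc (∑ i, ((k i : ℕ):ℝ)) ≤ ∑ i, (Real.logb q (2 / ℓ i) + 1) := Finset.sum_le_sum
              (fun i _ => hterm i)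
          _ = (∑ i, Real.logb q (2 / ℓ i)) + d := by
              rw [Finset.sum_add_distrib]
              simp
          _ = Real.logb q (∏ i, (2 / ℓ i)) + d := by
              rw [Real.logb_prod _ _ (fun i _ => ne_of_gt (div_pos two_pos (hℓ0 i)))]
          _ ≤ Real.logb q ((2:ℝ)^d / ε) + d := by linarith
          _ ≤ (⌈Real.logb q ((2:ℝ)^d / ε)⌉₊ : ℝ) + d := by
              linarith [Nat.le_ceil (Real.logb q ((2:ℝ)^d / ε))]
          _ = (m:ℝ) := by rw [hm]; push_cast; ring
      exact_mod_cast hcast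
    set i0 : Fin d := ⟨0, by omega⟩ with hi0
    set k' : Fin d → ℕ := fun i => k i + (if i = i0 then m - ∑ j, k j else 0) with hk'def
    have hk'sum : ∑ i, k' i = m := by
      simp only [hk'def]
      rw [Finset.sum_add_distrib, Finset.sum_ite_eq' Finset.univ i0 (fun _ => m - ∑ j, k j)]
      simp only [Finset.mem_univ, if_pos]
      omega
    have hkk' : ∀ i, k i ≤ k' i := fun i => Nat.le_add_right _ _
    set Q : Fin d → ℝ := fun i => (q:ℝ) ^ (k i : ℕ) with hQdef
    have hQpos : ∀ i, 0 < Q i := by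
      intro i; simp only [hQdef]; positivity
    set t : Fin d → ℕ := fun i => ⌈a i * Q i⌉₊ with htdef
    have hta : ∀ i, a i * Q i ≤ (t i : ℝ) := fun i => Nat.le_ceil _
    have htub : ∀ i, (t i : ℝ) < a i * Q i + 1 := fun i =>
      Nat.ceil_lt_add_one (mul_nonneg (ha0 i) (hQpos i).le)
    have hbtQ : ∀ i, (t i : ℝ) + 1 ≤ b i * Q i := by
      intro i
      have h1 := htub i
      have h2 := hki i
      have h3 : ℓ i = b i - a i := rfl
      nlinarith [hQpos i]
    have htQR : ∀ i, (t i : ℝ) < Q i := by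
      intro i
      have h1 := hbtQ i
      have h2 := hb1 i
      have h6 : (0:ℝ) ≤ (1 - b i) * Q i := mul_nonneg (by linarith) (hQpos i).le
      nlinarith [hQpos i]
    have htQN : ∀ i, t i < q ^ (k i) := by
      intro i
      have h := htQR i
      have h2 : ((t i : ℕ) : ℝ) < ((q ^ (k i) : ℕ) : ℝ) := by
        push_cast
        simp only [hQdef] at h
        linarith
      exact_mod_cast h2
    set τ : Fin d → ℕ → ℕ := fun i j => t i / q ^ (k i - 1 - j) % q with hτdef
    have hτlt : ∀ i j, τ i j < q := fun i j => Nat.mod_lt _ hq.pos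
    set w : ∀ i : Fin d, Fin (k' i) → ZMod q :=
      fun i j => if (j:ℕ) < k i then ((τ i (j:ℕ) : ℕ) : ZMod q) else 0 with hwdef
    obtain ⟨v, hv⟩ := BoxNet.net_surjective q m d hm0 c hc k' hk'sum w
    refine ⟨pt v, Finset.mem_image_of_mem pt (Finset.mem_univ v), ?_⟩
    intro i
    have hdigit : ∀ j, (hj : j < k i) →
        (((Polynomial.taylor (c i)) (BoxNet.polyOf q m v)).coeff j).val = τ i j := by
      intro j hj
      have hjk' : j < k' i := lt_of_lt_of_le hj (hkk' i)
      have h := hv i ⟨j, hjk'⟩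
      rw [h, hwdef]
      simp only [hj, if_pos]
      exact ZMod.val_natCast_of_lt (hτlt i j)
    have hkim : k i ≤ m :=
      le_trans (Finset.single_le_sum (f := fun j => k j) (fun _ _ => Nat.zero_le _)
        (Finset.mem_univ i)) hsumk
    -- split the sum
    have hsplit : pt v i =
        (∑ j ∈ Finset.range (k i),
          ((((Polynomial.taylor (c i)) (BoxNet.polyOf q m v)).coeff j).val : ℝ) / (q:ℝ)^(j+1)) +
        (∑ j ∈ Finset.Ico (k i) m,
          ((((Polynomial.taylor (c i)) (BoxNet.polyOf q m v)).coeff j).val : ℝ) / (q:ℝ)^(j+1)) := by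
      simp only [hpt]
      rw [Finset.range_eq_Ico, ← Finset.sum_Ico_consecutive _ (Nat.zero_le (k i)) hkim,
        ← Finset.range_eq_Ico]
    -- first part equals t i / Q i
    have hrecon : ∑ j ∈ Finset.range (k i), τ i j * q ^ (k i - 1 - j) = t i := by
      have h := BoxNet.digits_recon q (k i) (t i) (htQN i)
      have h2 := Finset.sum_range_reflect (fun j => t i / q ^ j % q * q ^ j) (k i)
      rw [← h]
      rw [← h2]
    have hS1 : (∑ j ∈ Finset.range (k i),
        ((((Polynomial.taylor (c i)) (BoxNet.polyOf q m v)).coeff j).val : ℝ) / (q:ℝ)^(j+1))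
        = (t i : ℝ) / Q i := by
      have hterm : ∀ j ∈ Finset.range (k i),
          ((((Polynomial.taylor (c i)) (BoxNet.polyOf q m v)).coeff j).val : ℝ) / (q:ℝ)^(j+1)
          = ((τ i j * q ^ (k i - 1 - j) : ℕ) : ℝ) / Q i := by
        intro j hj
        rw [Finset.mem_range] at hj
        rw [hdigit j hj]
        push_cast
        rw [div_eq_div_iff (by positivity) (hQpos i).ne']
        simp only [hQdef]
        rw [mul_assoc, ← pow_add]
        congr 2
        omega
      rw [Finset.sum_congr rfl hterm, ← Finset.sum_div, ← Nat.cast_sum, hrecon]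
    -- second part bounds
    have hS2lb : 0 ≤ ∑ j ∈ Finset.Ico (k i) m,
        ((((Polynomial.taylor (c i)) (BoxNet.polyOf q m v)).coeff j).val : ℝ) / (q:ℝ)^(j+1) := by
      apply Finset.sum_nonneg
      intro j _
      positivity
    have hS2ub : (∑ j ∈ Finset.Ico (k i) m,
        ((((Polynomial.taylor (c i)) (BoxNet.polyOf q m v)).coeff j).val : ℝ) / (q:ℝ)^(j+1))
        ≤ 1 / Q i := by
      have hterm : ∀ j ∈ Finset.Ico (k i) m,
          ((((Polynomial.taylor (c i)) (BoxNet.polyOf q m v)).coeff j).val : ℝ) / (q:ℝ)^(j+1)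
          ≤ ((q:ℝ) - 1) / (q:ℝ)^(j+1) := by
        intro j _
        gcongr
        have h1 : (((Polynomial.taylor (c i)) (BoxNet.polyOf q m v)).coeff j).val + 1 ≤ q :=
          ZMod.val_lt _
        have h2 := (Nat.cast_le (α := ℝ)).mpr h1
        push_cast at h2
        linarith
      calc _ ≤ ∑ j ∈ Finset.Ico (k i) m, ((q:ℝ) - 1) / (q:ℝ)^(j+1) :=
            Finset.sum_le_sum hterm
        _ = (∑ j ∈ Finset.range m, ((q:ℝ) - 1) / (q:ℝ)^(j+1))
            - ∑ j ∈ Finset.range (k i), ((q:ℝ) - 1) / (q:ℝ)^(j+1) := by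
            rw [Finset.sum_Ico_eq_sub _ hkim]
        _ = (1 - (1/(q:ℝ))^m) - (1 - (1/(q:ℝ))^(k i)) := by
            rw [BoxNet.digit_sum_le (q:ℝ) hq1R m, BoxNet.digit_sum_le (q:ℝ) hq1R (k i)]
        _ ≤ (1/(q:ℝ))^(k i) := by
            have : (0:ℝ) ≤ (1/(q:ℝ))^m := by positivity
            linarith
        _ = 1 / Q i := by
            simp only [hQdef]
            rw [one_div_pow]
    -- conclude
    have hlow : a i ≤ pt v i := by
      rw [hsplit, hS1]
      have : a i ≤ (t i : ℝ) / Q i := by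
        rw [le_div_iff₀ (hQpos i)]
        exact hta i
      linarith
    have hhigh : pt v i ≤ b i := by
      rw [hsplit, hS1]
      have h1 : (t i : ℝ) / Q i + 1 / Q i ≤ b i := by
        rw [← add_div, div_le_iff₀ (hQpos i)]
        exact hbtQ i
      linarith
    exact ⟨hlow, hhigh⟩


/-- There is a universal `C > 0` such that for every `d ≥ 1` and `ε ∈ (0,1)` there is a
point set of size at most `2^{C d log d}/ε` in `[0,1]^d` meeting every closed axis-aligned
box `B ⊆ [0,1]^d` of volume at least `ε`. -/
theorem box_net_high_dim :
    ∃ C : ℝ, 0 < C ∧ ∀ d : ℕ, 1 ≤ d → ∀ ε : ℝ, ε ∈ Set.Ioo (0 : ℝ) 1 →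
      ∃ P : Finset (EuclideanSpace ℝ (Fin d)),
        ↑P ⊆ unitCube d ∧
        (P.card : ℝ) ≤ (2 : ℝ) ^ (C * (d : ℝ) * Real.log d) / ε ∧
        ∀ a b : Fin d → ℝ,
          {x : EuclideanSpace ℝ (Fin d) | ∀ i, x i ∈ Set.Icc (a i) (b i)} ⊆ unitCube d →
          ENNReal.ofReal ε ≤
            volume {x : EuclideanSpace ℝ (Fin d) | ∀ i, x i ∈ Set.Icc (a i) (b i)} →
          ∃ p ∈ P, ∀ i, p i ∈ Set.Icc (a i) (b i) := by
  refine ⟨100, by norm_num, ?_⟩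
  intro d hd ε hε
  obtain ⟨hε0, hε1⟩ := hε
  rcases eq_or_lt_of_le hd with hd1 | hd2
  · -- d = 1 : an ε-grid
    subst hd1
    haveI : DecidableEq (EuclideanSpace ℝ (Fin 1)) := Classical.decEq _
    set n : ℕ := ⌊1/ε⌋₊ with hn
    refine ⟨(Finset.Icc 1 n).image
      (fun k : ℕ => (WithLp.toLp 2 (fun _ => (k:ℝ) * ε) : EuclideanSpace ℝ (Fin 1))), ?_, ?_, ?_⟩
    · intro x hx
      simp only [Finset.coe_image, Set.mem_image, Finset.mem_coe, Finset.mem_Icc] at hx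
      obtain ⟨k, ⟨hk1, hk2⟩, rfl⟩ := hx
      intro i
      constructor
      · positivity
      · calc (k:ℝ) * ε ≤ (n:ℝ) * ε := by
              apply mul_le_mul_of_nonneg_right _ hε0.le
              exact_mod_cast hk2
          _ ≤ (1/ε) * ε := mul_le_mul_of_nonneg_right (Nat.floor_le (by positivity)) hε0.le
          _ = 1 := by field_simp
    · have hc1 : ((Finset.Icc 1 n).image
          (fun k : ℕ => (WithLp.toLp 2 (fun _ => (k:ℝ) * ε) : EuclideanSpace ℝ (Fin 1)))).card ≤ n := by
        apply le_trans Finset.card_image_le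
        rw [Nat.card_Icc]
        omega
      have hc2 : (n:ℝ) ≤ 1/ε := Nat.floor_le (by positivity)
      have hc3 : (2:ℝ) ^ ((100:ℝ) * ((1:ℕ):ℝ) * Real.log ((1:ℕ):ℝ)) = 1 := by
        norm_num
      have hc4 : (2:ℝ) ^ ((100:ℝ) * ((1:ℕ):ℝ) * Real.log ((1:ℕ):ℝ)) / ε = 1/ε := by
        rw [hc3]
      rw [hc4]
      exact le_trans (by exact_mod_cast hc1) hc2
    · intro a b hsub hvol
      obtain ⟨ha0, hab, hb1, hprod⟩ := BoxNet.box_facts 1 ε hε0 a b hsub hvol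
      have hεl : ε ≤ b 0 - a 0 := by
        have := hprod
        rwa [Fin.prod_univ_one] at this
      set c : ℕ := ⌈a 0 / ε⌉₊ with hc
      set k : ℕ := max 1 c with hk
      have hk1 : 1 ≤ k := le_max_left _ _
      have hkε_lb : a 0 ≤ (k:ℝ) * ε := by
        rcases Nat.eq_zero_or_pos c with hc0 | hcpos
        · have ha00 : a 0 ≤ 0 := by
            by_contra hcon
            push_neg at hcon
            have : 0 < c := Nat.ceil_pos.mpr (div_pos hcon hε0)
            omega
          have hkεnn : (0:ℝ) ≤ (k:ℝ) * ε := by positivity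
          linarith
        · have hkc : k = c := by omega
          rw [hkc]
          calc a 0 = (a 0 / ε) * ε := by field_simp
            _ ≤ (c:ℝ) * ε := mul_le_mul_of_nonneg_right (Nat.le_ceil _) hε0.le
      have hkε_ub : (k:ℝ) * ε ≤ b 0 := by
        rcases Nat.eq_zero_or_pos c with hc0 | hcpos
        · have ha00 : a 0 ≤ 0 := by
            by_contra hcon
            push_neg at hcon
            have : 0 < c := Nat.ceil_pos.mpr (div_pos hcon hε0)
            omega
          have hkc : k = 1 := by omega
          have ha00' := ha0 0
          rw [hkc]
          push_cast
          linarith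
        · have hkc : k = c := by omega
          rw [hkc]
          have h1 : (c:ℝ) < a 0 / ε + 1 :=
            Nat.ceil_lt_add_one (div_nonneg (ha0 0) hε0.le)
          have h2 : (c:ℝ) * ε < (a 0 / ε + 1) * ε := mul_lt_mul_of_pos_right h1 hε0
          have h3 : (a 0 / ε + 1) * ε = a 0 + ε := by field_simp
          linarith
      refine ⟨WithLp.toLp 2 (fun _ => (k:ℝ) * ε), ?_, ?_⟩
      · rw [Finset.mem_image]
        refine ⟨k, ?_, rfl⟩
        rw [Finset.mem_Icc]
        refine ⟨hk1, ?_⟩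
        rw [hn]
        apply Nat.le_floor
        have hb01 : (k:ℝ) * ε ≤ 1 := le_trans hkε_ub (hb1 0)
        rw [le_div_iff₀ hε0]
        linarith
      · intro i
        have : i = 0 := Subsingleton.elim i 0
        rw [this]
        exact ⟨hkε_lb, hkε_ub⟩
  · -- d ≥ 2 : Faure-type net
    exact BoxNet.main_ge2 d (by omega) ε hε0 hε1
end
end
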